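/- arXiv:1402.2801 — 4 statements merged into one kernel-verified Lean document; each statement's English description precedes it below -/
import Mathlib

section
/- Fix an n-player repeated game with discount factor δ ∈ [0,1), a stage game with finite action sets A_i and payoffs u_i : ∏_j A_j → [0,1], and a public monitoring structure whose signal distributions satisfy (ε,γ)-differential privacy. Let σ = (σ_1,…,σ_n) be a perfect public equilibrium of the repeated game. Then for every public history h^t, the profile of mixed stage-game actions (σ_1(h^t),…,σ_n(h^t)) prescribed at that history forms an η-approximate Nash equilibrium of the stage game, where η = (δ/(1−δ))·(ε+γ). -/
open scoped BigOperators

section RepeatedGame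

variable {n : ℕ} {A : Fin n → Type*} [∀ i, Fintype (A i)] [∀ i, DecidableEq (A i)]
variable {S : Type*} [Fintype S]

/-- Expected payoff of a profile of mixed actions in the stage game. -/
noncomputable def expPay (u : (∀ j, A j) → ℝ) (α : ∀ i, A i → ℝ) : ℝ :=
  ∑ a : ∀ j, A j, (∏ j, α j (a j)) * u a

/-- The pure (point-mass) mixed action on `b`. -/
def pureAct (i : Fin n) (b : A i) : A i → ℝ := fun a => if a = b then 1 else 0

/-- `α` is a profile of mixed actions: nonnegative weights summing to one. -/
def IsMixedProfile (α : ∀ i, A i → ℝ) : Prop :=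
  (∀ i a, 0 ≤ α i a) ∧ ∀ i, ∑ a, α i a = 1

/-- An `η`-approximate Nash equilibrium of the stage game: no player can gain more than
`η` by a unilateral deviation to any pure action. -/
def ApproxNash (η : ℝ) (u : ∀ i : Fin n, (∀ j, A j) → ℝ) (α : ∀ i, A i → ℝ) : Prop :=
  ∀ (i : Fin n) (b : A i),
    expPay (u i) α ≥ expPay (u i) (Function.update α i (pureAct i b)) - η

/-- `(ε,γ)`-differential privacy of a public monitoring structure `P`: for every player
`i`, every pair of action profiles differing only in player `i`'s action, and every
event `E ⊆ S`, `exp(-ε)·P_{a'}(E) - γ ≤ P_a(E) ≤ exp(ε)·P_{a'}(E) + γ`. -/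
def PubDP (ε γ : ℝ) (P : (∀ j, A j) → S → ℝ) : Prop :=
  ∀ (a : ∀ j, A j) (i : Fin n) (b : A i) (E : Finset S),
    Real.exp (-ε) * (∑ s ∈ E, P (Function.update a i b) s) - γ ≤ ∑ s ∈ E, P a s ∧
    ∑ s ∈ E, P a s ≤ Real.exp ε * (∑ s ∈ E, P (Function.update a i b) s) + γ

/-- Probability that the public signal `s` is realized when the mixed profile `α` is
played. -/
noncomputable def sigProb (P : (∀ j, A j) → S → ℝ) (α : ∀ i, A i → ℝ) (s : S) : ℝ :=
  ∑ a : ∀ j, A j, (∏ j, α j (a j)) * P a s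

/-- `EU u P σ t h` is the expected stage payoff (w.r.t. `u`) obtained `t` periods after
the public history `h`, when players follow the public strategy profile `σ`. -/
noncomputable def EU (u : (∀ j, A j) → ℝ) (P : (∀ j, A j) → S → ℝ)
    (σ : ∀ i : Fin n, List S → A i → ℝ) : ℕ → List S → ℝ
  | 0, h => expPay u fun i => σ i h
  | t + 1, h => ∑ s : S, sigProb P (fun i => σ i h) s * EU u P σ t (h ++ [s])

/-- The normalized discounted continuation value from public history `h` under the
public strategy profile `σ`. -/
noncomputable def V (δ : ℝ) (u : (∀ j, A j) → ℝ) (P : (∀ j, A j) → S → ℝ)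
    (σ : ∀ i : Fin n, List S → A i → ℝ) (h : List S) : ℝ :=
  (1 - δ) * ∑' t : ℕ, δ ^ t * EU u P σ t h

/-- A public strategy for one player: a map from public histories to mixed actions. -/
def IsPubStrategy {i : Fin n} (σi : List S → A i → ℝ) : Prop :=
  ∀ h : List S, (∀ a, 0 ≤ σi h a) ∧ ∑ a, σi h a = 1

/-- A perfect public equilibrium: a profile of public strategies such that, at every
public history, no player can increase his normalized discounted continuation value by
deviating to another (public) strategy. -/
def IsPPE (δ : ℝ) (u : ∀ i : Fin n, (∀ j, A j) → ℝ) (P : (∀ j, A j) → S → ℝ)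
    (σ : ∀ i : Fin n, List S → A i → ℝ) : Prop :=
  (∀ i, IsPubStrategy (σ i)) ∧
  ∀ (h : List S) (i : Fin n) (σi' : List S → A i → ℝ), IsPubStrategy σi' →
    V δ (u i) P (Function.update σ i σi') h ≤ V δ (u i) P σ h

end RepeatedGame

section AuxLemmas

variable {n : ℕ} {A : Fin n → Type*} [∀ i, Fintype (A i)] [∀ i, DecidableEq (A i)]
variable {S : Type*} [Fintype S]

lemma weights_nonneg {α : ∀ i, A i → ℝ} (h0 : ∀ i a, 0 ≤ α i a) (a : ∀ j, A j) :
    0 ≤ ∏ j, α j (a j) :=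
  Finset.prod_nonneg fun j _ => h0 j (a j)

lemma sum_weights {α : ∀ i, A i → ℝ} (h1 : ∀ i, ∑ a, α i a = 1) :
    ∑ a : ∀ j, A j, ∏ j, α j (a j) = 1 := by
  have h := Finset.prod_univ_sum (fun i : Fin n => (Finset.univ : Finset (A i))) α
  rw [Fintype.piFinset_univ] at h
  rw [← h]
  simp [h1]

lemma expPay_mem {u : (∀ j, A j) → ℝ} (hu : ∀ a, u a ∈ Set.Icc (0:ℝ) 1)
    {α : ∀ i, A i → ℝ} (hα : IsMixedProfile α) :
    expPay u α ∈ Set.Icc (0:ℝ) 1 := by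
  constructor
  · exact Finset.sum_nonneg fun a _ => mul_nonneg (weights_nonneg hα.1 a) (hu a).1
  · calc expPay u α ≤ ∑ a : ∀ j, A j, ∏ j, α j (a j) :=
          Finset.sum_le_sum fun a _ =>
            mul_le_of_le_one_right (weights_nonneg hα.1 a) (hu a).2
      _ = 1 := sum_weights hα.2

lemma sigProb_nonneg {P : (∀ j, A j) → S → ℝ} (hP0 : ∀ a s, 0 ≤ P a s)
    {α : ∀ i, A i → ℝ} (h0 : ∀ i a, 0 ≤ α i a) (s : S) : 0 ≤ sigProb P α s :=
  Finset.sum_nonneg fun a _ => mul_nonneg (weights_nonneg h0 a) (hP0 a s)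

lemma sum_sigProb {P : (∀ j, A j) → S → ℝ} (hP1 : ∀ a, ∑ s, P a s = 1)
    {α : ∀ i, A i → ℝ} (hα : IsMixedProfile α) : ∑ s, sigProb P α s = 1 := by
  unfold sigProb
  rw [Finset.sum_comm]
  simp_rw [← Finset.mul_sum, hP1, mul_one]
  exact sum_weights hα.2

lemma sum_sig_mem {P : (∀ j, A j) → S → ℝ} (hP0 : ∀ a s, 0 ≤ P a s)
    (hP1 : ∀ a, ∑ s, P a s = 1) {α : ∀ i, A i → ℝ} (hα : IsMixedProfile α)
    {W : S → ℝ} (hW : ∀ s, W s ∈ Set.Icc (0:ℝ) 1) :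
    ∑ s, sigProb P α s * W s ∈ Set.Icc (0:ℝ) 1 := by
  constructor
  · exact Finset.sum_nonneg fun s _ => mul_nonneg (sigProb_nonneg hP0 hα.1 s) (hW s).1
  · calc ∑ s, sigProb P α s * W s ≤ ∑ s, sigProb P α s :=
          Finset.sum_le_sum fun s _ =>
            mul_le_of_le_one_right (sigProb_nonneg hP0 hα.1 s) (hW s).2
      _ = 1 := sum_sigProb hP1 hα

lemma EU_mem {u : (∀ j, A j) → ℝ} {P : (∀ j, A j) → S → ℝ}
    {σ : ∀ i : Fin n, List S → A i → ℝ}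
    (hu : ∀ a, u a ∈ Set.Icc (0:ℝ) 1) (hP0 : ∀ a s, 0 ≤ P a s)
    (hP1 : ∀ a, ∑ s, P a s = 1) (hσ : ∀ i, IsPubStrategy (σ i)) :
    ∀ (t : ℕ) (h : List S), EU u P σ t h ∈ Set.Icc (0:ℝ) 1 := by
  intro t
  induction t with
  | zero =>
    intro h
    exact expPay_mem hu ⟨fun i a => (hσ i h).1 a, fun i => (hσ i h).2⟩
  | succ t ih =>
    intro h
    have hm : IsMixedProfile fun i => σ i h :=
      ⟨fun i a => (hσ i h).1 a, fun i => (hσ i h).2⟩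
    simpa only [EU] using sum_sig_mem hP0 hP1 hm (fun s => ih (h ++ [s]))

lemma EU_congr {u : (∀ j, A j) → ℝ} {P : (∀ j, A j) → S → ℝ}
    {σ σ' : ∀ i : Fin n, List S → A i → ℝ} :
    ∀ (t : ℕ) (h : List S),
      (∀ h' : List S, h.length ≤ h'.length → ∀ j, σ' j h' = σ j h') →
      EU u P σ' t h = EU u P σ t h := by
  intro t
  induction t with
  | zero =>
    intro h hag
    simp only [EU]
    have : (fun i => σ' i h) = fun i => σ i h := funext fun i => hag h le_rfl i
    rw [this]
  | succ t ih =>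
    intro h hag
    simp only [EU]
    have h1 : (fun i => σ' i h) = fun i => σ i h := funext fun i => hag h le_rfl i
    refine Finset.sum_congr rfl fun s _ => ?_
    rw [h1, ih (h ++ [s]) (fun h' hl j => hag h' (le_trans (by simp) hl) j)]

lemma dp_step {P : (∀ j, A j) → S → ℝ} {ε γ : ℝ} (hε : 0 ≤ ε)
    (hP0 : ∀ a s, 0 ≤ P a s) (hP1 : ∀ a, ∑ s, P a s = 1) (hDP : PubDP ε γ P)
    (a : ∀ j, A j) (i : Fin n) (b : A i) (W : S → ℝ)
    (hW : ∀ s, W s ∈ Set.Icc (0:ℝ) 1) :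
    ∑ s, (P a s - P (Function.update a i b) s) * W s ≤ ε + γ := by
  classical
  set a' := Function.update a i b with ha'
  set E : Finset S := Finset.univ.filter (fun s => P a' s ≤ P a s) with hE
  have h1 : ∑ s, (P a s - P a' s) * W s ≤ ∑ s ∈ E, (P a s - P a' s) * W s := by
    rw [← Finset.sum_filter_add_sum_filter_not Finset.univ
      (fun s => P a' s ≤ P a s) (fun s => (P a s - P a' s) * W s)]
    have hneg : ∑ s ∈ Finset.univ.filter (fun s => ¬ P a' s ≤ P a s),
        (P a s - P a' s) * W s ≤ 0 :=
      Finset.sum_nonpos fun s hs => by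
        have hlt := (Finset.mem_filter.mp hs).2
        exact mul_nonpos_of_nonpos_of_nonneg (by push_neg at hlt; linarith) (hW s).1
    linarith
  have h2 : ∑ s ∈ E, (P a s - P a' s) * W s ≤ ∑ s ∈ E, (P a s - P a' s) :=
    Finset.sum_le_sum fun s hs => by
      have hd : 0 ≤ P a s - P a' s := by
        have := (Finset.mem_filter.mp hs).2; linarith
      exact mul_le_of_le_one_right hd (hW s).2
  have hEle : ∑ s ∈ E, P a s ≤ 1 := by
    rw [← hP1 a]
    exact Finset.sum_le_sum_of_subset_of_nonneg (Finset.subset_univ E)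
      (fun s _ _ => hP0 a s)
  have hEnn : (0:ℝ) ≤ ∑ s ∈ E, P a s := Finset.sum_nonneg fun s _ => hP0 a s
  have hDPl := (hDP a' i (a i) E).1
  rw [ha', Function.update_idem, Function.update_eq_self] at hDPl
  have hexp1 : 1 - ε ≤ Real.exp (-ε) := by
    have := Real.add_one_le_exp (-ε); linarith
  have hexp2 : Real.exp (-ε) ≤ 1 := Real.exp_le_one_iff.mpr (by linarith)
  have hkey : (1 - Real.exp (-ε)) * (∑ s ∈ E, P a s) ≤ 1 - Real.exp (-ε) :=
    mul_le_of_le_one_right (by linarith) hEle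
  have hsub : ∑ s ∈ E, (P a s - P a' s) = ∑ s ∈ E, P a s - ∑ s ∈ E, P a' s :=
    Finset.sum_sub_distrib _ _
  calc ∑ s, (P a s - P a' s) * W s ≤ ∑ s ∈ E, (P a s - P a' s) := le_trans h1 h2
    _ = ∑ s ∈ E, P a s - ∑ s ∈ E, P a' s := hsub
    _ ≤ ε + γ := by nlinarith [hDPl, hkey, hexp1]

lemma sum_pure_update (α : ∀ i, A i → ℝ) (i : Fin n) (b : A i)
    (hα1 : ∑ x, α i x = 1) (g : (∀ j, A j) → ℝ) :
    ∑ a : ∀ j, A j, (∏ j, α j (a j)) * g (Function.update a i b)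
      = ∑ a : ∀ j, A j, (∏ j, Function.update α i (pureAct i b) j (a j)) * g a := by
  classical
  have hpure : ∀ (F : A i → ℝ), ∑ x, pureAct i b x * F x = F b := by
    intro F
    simp [pureAct, ite_mul]
  have key : ∀ (c : ∀ j, A j) (y : A i),
      ∏ j, α j (Function.update c i y j) = α i y * ∏ j ∈ ({i}ᶜ : Finset (Fin n)), α j (c j) := by
    intro c y
    rw [Fintype.prod_eq_mul_prod_compl i (fun j => α j (Function.update c i y j)),
      Function.update_self]
    congr 1
    refine Finset.prod_congr rfl fun j hj => ?_
    rw [Function.update_of_ne (by simpa using hj)]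
  have keyR : ∀ c : ∀ j, A j,
      ∏ j, Function.update α i (pureAct i b) j (c j)
        = pureAct i b (c i) * ∏ j ∈ ({i}ᶜ : Finset (Fin n)), α j (c j) := by
    intro c
    rw [Fintype.prod_eq_mul_prod_compl i
      (fun j => Function.update α i (pureAct i b) j (c j)), Function.update_self]
    congr 1
    refine Finset.prod_congr rfl fun j hj => ?_
    rw [Function.update_of_ne (by simpa using hj)]
  let ψ : ((∀ j, A j) × A i) ≃ ((∀ j, A j) × A i) :=
    { toFun := fun p => (Function.update p.1 i p.2, p.1 i)
      invFun := fun p => (Function.update p.1 i p.2, p.1 i)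
      left_inv := fun p => by
        simp [Function.update_idem, Function.update_self, Function.update_eq_self]
      right_inv := fun p => by
        simp [Function.update_idem, Function.update_self, Function.update_eq_self] }
  calc ∑ a : ∀ j, A j, (∏ j, α j (a j)) * g (Function.update a i b)
      = ∑ a : ∀ j, A j, ∑ x : A i,
          pureAct i b x * ((∏ j, α j (a j)) * g (Function.update a i x)) := by
        refine Finset.sum_congr rfl fun a _ => ?_
        rw [hpure (fun x => (∏ j, α j (a j)) * g (Function.update a i x))]
    _ = ∑ p : (∀ j, A j) × A i,
          pureAct i b p.2 * ((∏ j, α j (p.1 j)) * g (Function.update p.1 i p.2)) := by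
        rw [Fintype.sum_prod_type]
    _ = ∑ p : (∀ j, A j) × A i,
          pureAct i b (p.1 i) *
            ((α i p.2 * ∏ j ∈ ({i}ᶜ : Finset (Fin n)), α j (p.1 j)) * g p.1) := by
        refine (Fintype.sum_equiv ψ _ _ fun p => ?_).symm
        show pureAct i b (p.1 i) *
            ((α i p.2 * ∏ j ∈ ({i}ᶜ : Finset (Fin n)), α j (p.1 j)) * g p.1)
          = pureAct i b (p.1 i) *
            ((∏ j, α j (Function.update p.1 i p.2 j)) *
              g (Function.update (Function.update p.1 i p.2) i (p.1 i)))
        rw [key, Function.update_idem, Function.update_eq_self]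
    _ = ∑ a : ∀ j, A j, (∏ j, Function.update α i (pureAct i b) j (a j)) * g a := by
        rw [Fintype.sum_prod_type]
        refine Finset.sum_congr rfl fun c _ => ?_
        have : ∑ y : A i, pureAct i b (c i) *
            ((α i y * ∏ j ∈ ({i}ᶜ : Finset (Fin n)), α j (c j)) * g c)
            = (∑ y : A i, α i y) *
              (pureAct i b (c i) * ((∏ j ∈ ({i}ᶜ : Finset (Fin n)), α j (c j)) * g c)) := by
          rw [Finset.sum_mul]
          exact Finset.sum_congr rfl fun y _ => by ring
        rw [this, hα1, one_mul, keyR c]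
        ring

lemma dp_mix {P : (∀ j, A j) → S → ℝ} {ε γ : ℝ} (hε : 0 ≤ ε)
    (hP0 : ∀ a s, 0 ≤ P a s) (hP1 : ∀ a, ∑ s, P a s = 1) (hDP : PubDP ε γ P)
    {α : ∀ i, A i → ℝ} (hα : IsMixedProfile α) (i : Fin n) (b : A i)
    (W : S → ℝ) (hW : ∀ s, W s ∈ Set.Icc (0:ℝ) 1) :
    ∑ s, (sigProb P α s - sigProb P (Function.update α i (pureAct i b)) s) * W s
      ≤ ε + γ := by
  have hsig : ∀ s : S, sigProb P (Function.update α i (pureAct i b)) s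
      = ∑ a : ∀ j, A j, (∏ j, α j (a j)) * P (Function.update a i b) s := by
    intro s
    exact (sum_pure_update α i b (hα.2 i) (fun a => P a s)).symm
  have hrw : ∀ s, (sigProb P α s - sigProb P (Function.update α i (pureAct i b)) s) * W s
      = ∑ a : ∀ j, A j, (∏ j, α j (a j)) *
          ((P a s - P (Function.update a i b) s) * W s) := by
    intro s
    rw [hsig s, sigProb, ← Finset.sum_sub_distrib, Finset.sum_mul]
    exact Finset.sum_congr rfl fun a _ => by ring
  calc ∑ s, (sigProb P α s - sigProb P (Function.update α i (pureAct i b)) s) * W s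
      = ∑ a : ∀ j, A j, ∑ s, (∏ j, α j (a j)) *
          ((P a s - P (Function.update a i b) s) * W s) := by
        simp_rw [hrw]; rw [Finset.sum_comm]
    _ = ∑ a : ∀ j, A j, (∏ j, α j (a j)) *
          ∑ s, (P a s - P (Function.update a i b) s) * W s := by
        simp_rw [Finset.mul_sum]
    _ ≤ ∑ a : ∀ j, A j, (∏ j, α j (a j)) * (ε + γ) :=
        Finset.sum_le_sum fun a _ =>
          mul_le_mul_of_nonneg_left (dp_step hε hP0 hP1 hDP a i b W hW)
            (weights_nonneg hα.1 a)
    _ = ε + γ := by rw [← Finset.sum_mul, sum_weights hα.2, one_mul]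

end AuxLemmas


/-- **Anti-folk theorem for perfect public equilibria (Theorem 1 of the paper).**
Fix a repeated game with discount factor `δ ∈ [0,1)`, stage payoffs in `[0,1]`, and a
public monitoring structure satisfying `(ε,γ)`-differential privacy.  If `σ` is a
perfect public equilibrium, then at every public history `h` the prescribed profile of
mixed actions `(σ₁(h),…,σₙ(h))` is an `η`-approximate Nash equilibrium of the stage
game, with `η = (δ/(1-δ))·(ε+γ)`. -/
theorem ppe_approx_stage_nash {n : ℕ} {A : Fin n → Type*}
    [∀ i, Fintype (A i)] [∀ i, DecidableEq (A i)] {S : Type*} [Fintype S]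
    (δ : ℝ) (hδ0 : 0 ≤ δ) (hδ1 : δ < 1)
    (u : ∀ i : Fin n, (∀ j, A j) → ℝ) (hu : ∀ i a, u i a ∈ Set.Icc (0 : ℝ) 1)
    (P : (∀ j, A j) → S → ℝ)
    (hP0 : ∀ a s, 0 ≤ P a s) (hP1 : ∀ a, ∑ s, P a s = 1)
    (ε γ : ℝ) (hε : 0 ≤ ε) (hγ : 0 ≤ γ) (hDP : PubDP ε γ P)
    (σ : ∀ i : Fin n, List S → A i → ℝ) (hσ : IsPPE δ u P σ)
    (h : List S) :
    ApproxNash (δ / (1 - δ) * (ε + γ)) u (fun i => σ i h) := by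
  classical
  obtain ⟨hpub, hopt⟩ := hσ
  intro i b
  set α : ∀ j, A j → ℝ := fun j => σ j h with hαdef
  have hαmix : IsMixedProfile α := ⟨fun j a => (hpub j h).1 a, fun j => (hpub j h).2⟩
  set α' : ∀ j, A j → ℝ := Function.update α i (pureAct i b) with hα'def
  have hα'mix : IsMixedProfile α' := by
    constructor
    · intro j a
      by_cases hj : j = i
      · subst hj
        rw [hα'def, Function.update_self]
        unfold pureAct
        split <;> norm_num
      · rw [hα'def, Function.update_of_ne hj]
        exact hαmix.1 j a
    · intro j
      by_cases hj : j = i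
      · subst hj
        rw [hα'def, Function.update_self]
        simp [pureAct]
      · rw [hα'def, Function.update_of_ne hj]
        exact hαmix.2 j
  -- the one-shot deviation strategy
  set σi' : List S → A i → ℝ := fun h' => if h' = h then pureAct i b else σ i h'
    with hσi'def
  have hσi'pub : IsPubStrategy σi' := by
    intro h'
    simp only [hσi'def]
    by_cases hh : h' = h
    · rw [if_pos hh]
      exact ⟨fun a => by unfold pureAct; split <;> norm_num, by simp [pureAct]⟩
    · rw [if_neg hh]
      exact hpub i h'
  set σ' : ∀ j : Fin n, List S → A j → ℝ := Function.update σ i σi' with hσ'def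
  have hpub' : ∀ j, IsPubStrategy (σ' j) := by
    intro j
    by_cases hj : j = i
    · subst hj; rw [hσ'def, Function.update_self]; exact hσi'pub
    · rw [hσ'def, Function.update_of_ne hj]; exact hpub j
  have hprofile : (fun j => σ' j h) = α' := by
    funext j a
    by_cases hj : j = i
    · subst hj
      rw [hσ'def, Function.update_self]
      simp only [hσi'def]
      simp [hα'def]
    · rw [hσ'def, Function.update_of_ne hj, hα'def, Function.update_of_ne hj]
  have hcont : ∀ (s : S) (t : ℕ),
      EU (u i) P σ' t (h ++ [s]) = EU (u i) P σ t (h ++ [s]) := by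
    intro s t
    refine EU_congr t (h ++ [s]) fun h' hl j => ?_
    by_cases hj : j = i
    · subst hj
      rw [hσ'def, Function.update_self]
      simp only [hσi'def]
      rw [if_neg]
      intro hcon
      rw [hcon] at hl
      simp at hl
    · rw [hσ'def, Function.update_of_ne hj]
  have hEUσ := EU_mem (hu i) hP0 hP1 hpub
  have hEUσ' := EU_mem (u := u i) (hu i) hP0 hP1 hpub'
  have h1δ : (0:ℝ) < 1 - δ := by linarith
  have hgeo : Summable (fun t : ℕ => δ ^ t) := summable_geometric_of_lt_one hδ0 hδ1
  have hgeo1 : Summable (fun t : ℕ => δ ^ (t + 1)) := by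
    simpa [pow_succ] using hgeo.mul_right δ
  have hsumσ : Summable (fun t => δ ^ t * EU (u i) P σ t h) :=
    Summable.of_nonneg_of_le
      (fun t => mul_nonneg (pow_nonneg hδ0 t) (hEUσ t h).1)
      (fun t => mul_le_of_le_one_right (pow_nonneg hδ0 t) (hEUσ t h).2) hgeo
  have hsumσ' : Summable (fun t => δ ^ t * EU (u i) P σ' t h) :=
    Summable.of_nonneg_of_le
      (fun t => mul_nonneg (pow_nonneg hδ0 t) (hEUσ' t h).1)
      (fun t => mul_le_of_le_one_right (pow_nonneg hδ0 t) (hEUσ' t h).2) hgeo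
  -- the continuation-value sums
  set G : ℕ → ℝ := fun t => ∑ s, sigProb P α s * EU (u i) P σ t (h ++ [s]) with hGdef
  set G' : ℕ → ℝ := fun t => ∑ s, sigProb P α' s * EU (u i) P σ t (h ++ [s]) with hG'def
  have hGmem : ∀ t, G t ∈ Set.Icc (0:ℝ) 1 := fun t =>
    sum_sig_mem hP0 hP1 hαmix fun s => hEUσ t (h ++ [s])
  have hG'mem : ∀ t, G' t ∈ Set.Icc (0:ℝ) 1 := fun t =>
    sum_sig_mem hP0 hP1 hα'mix fun s => hEUσ t (h ++ [s])
  have hEUsucc : ∀ t, EU (u i) P σ (t + 1) h = G t := fun t => rfl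
  have hEU'succ : ∀ t, EU (u i) P σ' (t + 1) h = G' t := by
    intro t
    show (∑ s : S, sigProb P (fun j => σ' j h) s * EU (u i) P σ' t (h ++ [s])) = G' t
    rw [hG'def]
    exact Finset.sum_congr rfl fun s _ => by rw [hprofile, hcont s t]
  have hEU0 : EU (u i) P σ 0 h = expPay (u i) α := rfl
  have hEU'0 : EU (u i) P σ' 0 h = expPay (u i) α' := by
    show expPay (u i) (fun j => σ' j h) = expPay (u i) α'
    rw [hprofile]
  -- the equilibrium inequality
  have hVle := hopt h i σi' hσi'pub
  unfold V at hVle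
  have hT : (∑' t : ℕ, δ ^ t * EU (u i) P σ' t h)
      ≤ ∑' t : ℕ, δ ^ t * EU (u i) P σ t h :=
    le_of_mul_le_mul_left (by exact hVle) h1δ
  rw [Summable.tsum_eq_zero_add hsumσ', Summable.tsum_eq_zero_add hsumσ] at hT
  simp only [pow_zero, one_mul, hEU0, hEU'0] at hT
  have hrwG : ∀ t : ℕ, δ ^ (t + 1) * EU (u i) P σ (t + 1) h = δ ^ (t + 1) * G t :=
    fun t => by rw [hEUsucc]
  have hrwG' : ∀ t : ℕ, δ ^ (t + 1) * EU (u i) P σ' (t + 1) h = δ ^ (t + 1) * G' t :=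
    fun t => by rw [hEU'succ]
  simp only [hrwG, hrwG'] at hT
  -- summability of the tails
  have hsumG : Summable (fun t => δ ^ (t + 1) * G t) :=
    Summable.of_nonneg_of_le
      (fun t => mul_nonneg (pow_nonneg hδ0 _) (hGmem t).1)
      (fun t => mul_le_of_le_one_right (pow_nonneg hδ0 _) (hGmem t).2) hgeo1
  have hsumG' : Summable (fun t => δ ^ (t + 1) * G' t) :=
    Summable.of_nonneg_of_le
      (fun t => mul_nonneg (pow_nonneg hδ0 _) (hG'mem t).1)
      (fun t => mul_le_of_le_one_right (pow_nonneg hδ0 _) (hG'mem t).2) hgeo1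
  -- the key per-period bound
  have hper : ∀ t : ℕ, G t - G' t ≤ ε + γ := by
    intro t
    have := dp_mix hε hP0 hP1 hDP hαmix i b
      (fun s => EU (u i) P σ t (h ++ [s])) (fun s => hEUσ t (h ++ [s]))
    calc G t - G' t
        = ∑ s, (sigProb P α s - sigProb P α' s) * EU (u i) P σ t (h ++ [s]) := by
          rw [hGdef, hG'def, ← Finset.sum_sub_distrib]
          exact Finset.sum_congr rfl fun s _ => by ring
      _ ≤ ε + γ := by rw [hα'def]; exact this
  -- sum up the per-period bounds
  have htail : (∑' t : ℕ, δ ^ (t + 1) * G t) - (∑' t : ℕ, δ ^ (t + 1) * G' t)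
      ≤ δ / (1 - δ) * (ε + γ) := by
    rw [← Summable.tsum_sub hsumG hsumG']
    have hle : ∀ t : ℕ, δ ^ (t + 1) * G t - δ ^ (t + 1) * G' t
        ≤ δ * (ε + γ) * δ ^ t := by
      intro t
      have h1 : δ ^ (t + 1) * G t - δ ^ (t + 1) * G' t
          = δ ^ (t + 1) * (G t - G' t) := by ring
      have h2 : δ ^ (t + 1) * (G t - G' t) ≤ δ ^ (t + 1) * (ε + γ) :=
        mul_le_mul_of_nonneg_left (hper t) (pow_nonneg hδ0 _)
      calc δ ^ (t + 1) * G t - δ ^ (t + 1) * G' t ≤ δ ^ (t + 1) * (ε + γ) := by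
            rw [h1]; exact h2
        _ = δ * (ε + γ) * δ ^ t := by ring
    calc (∑' t : ℕ, (δ ^ (t + 1) * G t - δ ^ (t + 1) * G' t))
        ≤ ∑' t : ℕ, δ * (ε + γ) * δ ^ t :=
          Summable.tsum_le_tsum hle (hsumG.sub hsumG') (hgeo.mul_left _)
      _ = δ * (ε + γ) * (1 - δ)⁻¹ := by
          rw [tsum_mul_left, tsum_geometric_of_lt_one hδ0 hδ1]
      _ = δ / (1 - δ) * (ε + γ) := by
          rw [div_eq_mul_inv]
          ring
  show expPay (u i) α ≥ expPay (u i) α' - δ / (1 - δ) * (ε + γ)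
  linarith
end

section
/- Fix an n-player repeated game with discount factor δ ∈ [0,1), a stage game with finite action sets A_i and payoffs u_i : ∏_j A_j → [0,1], and a private monitoring structure whose joint signal distributions satisfy (ε,γ)-differential privacy and which has no observable deviations. Let σ = (σ_1,…,σ_n) be a sequential equilibrium of the repeated game. Then for every vector of private histories (h_1^t,…,h_n^t) that occurs with positive probability when players play according to σ, the distribution on period-t action profiles (σ_1(h_1^t),…,σ_n(h_n^t)) — with players' private histories serving as the correlating signals — forms an η-approximate correlated equilibrium of the stage game, where η = (δ/(1−δ))·(ε+γ). -/
open scoped BigOperators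

section RepeatedGame

variable {n : ℕ} {A : Fin n → Type*} [∀ i, Fintype (A i)] [∀ i, DecidableEq (A i)]
variable {S : Type*} [Fintype S] [DecidableEq S]

/-- `(ε,γ)`-differential privacy of a private monitoring structure `P`, a distribution
over vectors of private signals: for every player `i`, every pair of action profiles
differing only in player `i`'s action, and every event `E ⊆ S^n`,
`exp(-ε)·P_{a'}(E) - γ ≤ P_a(E) ≤ exp(ε)·P_{a'}(E) + γ`. -/
def PrivDP (ε γ : ℝ) (P : (∀ j, A j) → (Fin n → S) → ℝ) : Prop :=
  ∀ (a : ∀ j, A j) (i : Fin n) (b : A i) (E : Finset (Fin n → S)),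
    Real.exp (-ε) * (∑ sv ∈ E, P (Function.update a i b) sv) - γ ≤ ∑ sv ∈ E, P a sv ∧
    ∑ sv ∈ E, P a sv ≤ Real.exp ε * (∑ sv ∈ E, P (Function.update a i b) sv) + γ

/-- No observable deviations: the marginal probability of each private signal is
positive after every action profile. -/
def NoObsDevPriv (P : (∀ j, A j) → (Fin n → S) → ℝ) : Prop :=
  ∀ (a : ∀ j, A j) (i : Fin n) (s : S),
    0 < ∑ sv : Fin n → S, (if sv i = s then P a sv else 0)

/-- An *outcome prefix* records, for each elapsed period, the realized vector of private
signals and the full action profile.  `privH i o` is player `i`'s private history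
extracted from the outcome prefix `o`: his own private signals and own past actions. -/
def privH (i : Fin n) (o : List ((Fin n → S) × (∀ j, A j))) : List (S × A i) :=
  o.map fun p => (p.1 i, p.2 i)

/-- `outProb P σ past o`: probability that the outcome continues as `o` after the
outcome prefix `past`, when each player `j` plays strategy `σ j`.
`outProb P σ [] o` is the probability of the outcome prefix `o`. -/
noncomputable def outProb (P : (∀ j, A j) → (Fin n → S) → ℝ)
    (σ : ∀ i : Fin n, List (S × A i) → A i → ℝ) :
    List ((Fin n → S) × (∀ j, A j)) → List ((Fin n → S) × (∀ j, A j)) → ℝ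
  | _, [] => 1
  | past, (sv, a) :: rest =>
      (∏ j, σ j (privH j past) (a j)) * P a sv * outProb P σ (past ++ [(sv, a)]) rest

/-- Indicator that the outcome matrix `m` (one signal-vector/action-profile pair per
period) is consistent with player `i`'s private history in the outcome prefix `o`. -/
noncomputable def consInd (i : Fin n) (o : List ((Fin n → S) × (∀ j, A j)))
    (m : Fin o.length → ((Fin n → S) × (∀ j, A j))) : ℝ :=
  if ∀ τ, (m τ).1 i = (o.get τ).1 i ∧ (m τ).2 i = (o.get τ).2 i then 1 else 0

/-- `EUW u P σ t o`: expected stage payoff `t` periods after the outcome prefix `o`. -/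
noncomputable def EUW (u : (∀ j, A j) → ℝ) (P : (∀ j, A j) → (Fin n → S) → ℝ)
    (σ : ∀ i : Fin n, List (S × A i) → A i → ℝ) :
    ℕ → List ((Fin n → S) × (∀ j, A j)) → ℝ
  | 0, o => ∑ a : ∀ j, A j, (∏ j, σ j (privH j o) (a j)) * u a
  | t + 1, o => ∑ a : ∀ j, A j, ∑ sv : Fin n → S,
      (∏ j, σ j (privH j o) (a j)) * P a sv * EUW u P σ t (o ++ [(sv, a)])

/-- Normalized discounted continuation value from the outcome prefix `o` under `σ`. -/
noncomputable def W (δ : ℝ) (u : (∀ j, A j) → ℝ) (P : (∀ j, A j) → (Fin n → S) → ℝ)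
    (σ : ∀ i : Fin n, List (S × A i) → A i → ℝ)
    (o : List ((Fin n → S) × (∀ j, A j))) : ℝ :=
  (1 - δ) * ∑' t : ℕ, δ ^ t * EUW u P σ t o

/-- A strategy for one player: a map from private histories to mixed actions. -/
def IsStrategy {i : Fin n} (σi : List (S × A i) → A i → ℝ) : Prop :=
  ∀ h : List (S × A i), (∀ a, 0 ≤ σi h a) ∧ ∑ a, σi h a = 1

/-- A sequential equilibrium: a profile of strategies together with a belief system `β`
(for each player `i` and each outcome prefix `o`, a distribution over outcome matrices
consistent with player `i`'s private history in `o`), such that beliefs are obtained by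
Bayes' rule at histories of positive probability, and at every private history every
player's continuation strategy is a best reply to the opponents' continuation strategies
given his beliefs.  (Beliefs at an outcome prefix `o` depend only on player `i`'s
private history `privH i o`, as required of the indicator `consInd`.) -/
def IsSeqEq (δ : ℝ) (u : ∀ i : Fin n, (∀ j, A j) → ℝ)
    (P : (∀ j, A j) → (Fin n → S) → ℝ)
    (σ : ∀ i : Fin n, List (S × A i) → A i → ℝ) : Prop :=
  (∀ i, IsStrategy (σ i)) ∧
  ∃ β : ∀ (i : Fin n) (o : List ((Fin n → S) × (∀ j, A j))),
      (Fin o.length → ((Fin n → S) × (∀ j, A j))) → ℝ,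
    (∀ i o m, 0 ≤ β i o m) ∧
    (∀ (i : Fin n) (o : List ((Fin n → S) × (∀ j, A j)))
        (m : Fin o.length → ((Fin n → S) × (∀ j, A j))),
        consInd i o m = 0 → β i o m = 0) ∧
    (∀ (i : Fin n) (o : List ((Fin n → S) × (∀ j, A j))), ∑ m, β i o m = 1) ∧
    (∀ (i : Fin n) (o : List ((Fin n → S) × (∀ j, A j))),
        0 < (∑ m', consInd i o m' * outProb P σ [] (List.ofFn m')) →
        ∀ m, β i o m * (∑ m', consInd i o m' * outProb P σ [] (List.ofFn m'))
          = consInd i o m * outProb P σ [] (List.ofFn m)) ∧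
    (∀ (i : Fin n) (o : List ((Fin n → S) × (∀ j, A j)))
        (σi' : List (S × A i) → A i → ℝ), IsStrategy σi' →
        ∑ m, β i o m * W δ (u i) P (Function.update σ i σi') (List.ofFn m)
          ≤ ∑ m, β i o m * W δ (u i) P σ (List.ofFn m))



lemma sum_prod_eq_one (w : ∀ j, A j → ℝ) (hw : ∀ j, ∑ x, w j x = 1) :
    ∑ a : ∀ j, A j, ∏ j, w j (a j) = 1 := by
  classical
  calc ∑ a : ∀ j, A j, ∏ j, w j (a j)
      = ∑ a ∈ Fintype.piFinset (fun _ => Finset.univ), ∏ j, w j (a j) := by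
        rw [Fintype.piFinset_univ]
    _ = ∏ j, ∑ x, w j x := (Finset.prod_univ_sum _ _).symm
    _ = 1 := by simp [hw]

lemma swap_sum (i : Fin n) (v v' : A i → ℝ) (w : ∀ j, A j → ℝ)
    (K : (∀ j, A j) → ℝ) :
    ∑ x : A i, ∑ a : ∀ j, A j,
      v' x * v (a i) * (∏ j ∈ Finset.univ.erase i, w j (a j)) * K a
    = ∑ x : A i, ∑ a : ∀ j, A j,
      v' (a i) * v x * (∏ j ∈ Finset.univ.erase i, w j (a j)) * K (Function.update a i x) := by
  classical
  have hinv : Function.Involutive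
      (fun p : A i × (∀ j, A j) => ((p.2 i), Function.update p.2 i p.1)) := by
    intro p
    simp [Function.update_idem]
  calc ∑ x : A i, ∑ a : ∀ j, A j,
        v' x * v (a i) * (∏ j ∈ Finset.univ.erase i, w j (a j)) * K a
      = ∑ p : A i × (∀ j, A j),
        v' p.1 * v (p.2 i) * (∏ j ∈ Finset.univ.erase i, w j (p.2 j)) * K p.2 :=
        (Fintype.sum_prod_type' (fun x a =>
          v' x * v (a i) * (∏ j ∈ Finset.univ.erase i, w j (a j)) * K a)).symm
    _ = ∑ p : A i × (∀ j, A j),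
        v' ((Function.Involutive.toPerm _ hinv) p).1
          * v ((((Function.Involutive.toPerm _ hinv) p).2) i)
          * (∏ j ∈ Finset.univ.erase i, w j ((((Function.Involutive.toPerm _ hinv) p).2) j))
          * K (((Function.Involutive.toPerm _ hinv) p).2) :=
        (Equiv.sum_comp (Function.Involutive.toPerm _ hinv) _).symm
    _ = ∑ p : A i × (∀ j, A j),
        v' (p.2 i) * v p.1 * (∏ j ∈ Finset.univ.erase i, w j (p.2 j))
          * K (Function.update p.2 i p.1) := by
        apply Finset.sum_congr rfl
        intro p _
        have h1 : ∀ j ∈ Finset.univ.erase i,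
            w j (Function.update p.2 i p.1 j) = w j (p.2 j) := by
          intro j hj
          rw [Function.update_of_ne (Finset.ne_of_mem_erase hj)]
        simp only [Function.Involutive.coe_toPerm]
        rw [Finset.prod_congr rfl h1]
        simp
    _ = ∑ x : A i, ∑ a : ∀ j, A j,
        v' (a i) * v x * (∏ j ∈ Finset.univ.erase i, w j (a j))
          * K (Function.update a i x) :=
        Fintype.sum_prod_type' (fun x a =>
          v' (a i) * v x * (∏ j ∈ Finset.univ.erase i, w j (a j)) * K (Function.update a i x))

set_option linter.unusedSectionVars false
set_option maxHeartbeats 1000000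

lemma privH_append (j : Fin n) (p : List ((Fin n → S) × (∀ j, A j)))
    (x : (Fin n → S) × (∀ j, A j)) :
    privH j (p ++ [x]) = privH j p ++ [(x.1 j, x.2 j)] := by
  simp [privH]

variable {δ ε γ : ℝ} {u : (∀ j, A j) → ℝ} {P : (∀ j, A j) → (Fin n → S) → ℝ}
  {σ σ' : ∀ i : Fin n, List (S × A i) → A i → ℝ}

lemma EUW_mem_Icc (hu : ∀ a, u a ∈ Set.Icc (0:ℝ) 1)
    (hP0 : ∀ a sv, 0 ≤ P a sv) (hP1 : ∀ a, ∑ sv, P a sv = 1)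
    (hs : ∀ j, IsStrategy (σ j)) :
    ∀ t o, EUW u P σ t o ∈ Set.Icc (0:ℝ) 1 := by
  intro t
  induction t with
  | zero =>
    intro o
    constructor
    · apply Finset.sum_nonneg
      intro a _
      exact mul_nonneg (Finset.prod_nonneg fun j _ => (hs j _).1 _) (hu a).1
    · calc ∑ a : ∀ j, A j, (∏ j, σ j (privH j o) (a j)) * u a
          ≤ ∑ a : ∀ j, A j, (∏ j, σ j (privH j o) (a j)) * 1 := by
            apply Finset.sum_le_sum
            intro a _
            exact mul_le_mul_of_nonneg_left (hu a).2
              (Finset.prod_nonneg fun j _ => (hs j _).1 _)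
        _ = 1 := by
            simp only [mul_one]
            exact sum_prod_eq_one _ (fun j => (hs j _).2)
  | succ t ih =>
    intro o
    constructor
    · apply Finset.sum_nonneg
      intro a _
      apply Finset.sum_nonneg
      intro sv _
      exact mul_nonneg (mul_nonneg
        (Finset.prod_nonneg fun j _ => (hs j _).1 _) (hP0 a sv)) (ih _).1
    · calc (EUW u P σ (t+1) o)
          = ∑ a : ∀ j, A j, ∑ sv : Fin n → S,
              (∏ j, σ j (privH j o) (a j)) * P a sv * EUW u P σ t (o ++ [(sv, a)]) := rfl
        _ ≤ ∑ a : ∀ j, A j, ∑ sv : Fin n → S,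
              (∏ j, σ j (privH j o) (a j)) * P a sv * 1 := by
            apply Finset.sum_le_sum; intro a _
            apply Finset.sum_le_sum; intro sv _
            exact mul_le_mul_of_nonneg_left (ih _).2
              (mul_nonneg (Finset.prod_nonneg fun j _ => (hs j _).1 _) (hP0 a sv))
        _ = 1 := by
            simp only [mul_one, ← Finset.mul_sum]
            calc ∑ a : ∀ j, A j, (∏ j, σ j (privH j o) (a j)) * ∑ sv, P a sv
                = ∑ a : ∀ j, A j, ∏ j, σ j (privH j o) (a j) := by
                  apply Finset.sum_congr rfl; intro a _; rw [hP1 a, mul_one]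
              _ = 1 := sum_prod_eq_one _ (fun j => (hs j _).2)

lemma summable_EUW (hδ0 : 0 ≤ δ) (hδ1 : δ < 1)
    (hu : ∀ a, u a ∈ Set.Icc (0:ℝ) 1)
    (hP0 : ∀ a sv, 0 ≤ P a sv) (hP1 : ∀ a, ∑ sv, P a sv = 1)
    (hs : ∀ j, IsStrategy (σ j)) (o : List ((Fin n → S) × (∀ j, A j))) :
    Summable (fun t => δ ^ t * EUW u P σ t o) := by
  apply Summable.of_nonneg_of_le
    (fun t => mul_nonneg (pow_nonneg hδ0 t) (EUW_mem_Icc hu hP0 hP1 hs t o).1)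
    (fun t => ?_) (summable_geometric_of_lt_one hδ0 hδ1)
  exact mul_le_of_le_one_right (pow_nonneg hδ0 t) (EUW_mem_Icc hu hP0 hP1 hs t o).2

lemma W_mem_Icc (hδ0 : 0 ≤ δ) (hδ1 : δ < 1)
    (hu : ∀ a, u a ∈ Set.Icc (0:ℝ) 1)
    (hP0 : ∀ a sv, 0 ≤ P a sv) (hP1 : ∀ a, ∑ sv, P a sv = 1)
    (hs : ∀ j, IsStrategy (σ j)) (o : List ((Fin n → S) × (∀ j, A j))) :
    W δ u P σ o ∈ Set.Icc (0:ℝ) 1 := by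
  have h1δ : (0:ℝ) < 1 - δ := by linarith
  constructor
  · apply mul_nonneg (le_of_lt h1δ)
    apply tsum_nonneg
    intro t
    exact mul_nonneg (pow_nonneg hδ0 t) (EUW_mem_Icc hu hP0 hP1 hs t o).1
  · have hle : ∑' t : ℕ, δ ^ t * EUW u P σ t o ≤ ∑' t : ℕ, δ ^ t := by
      apply Summable.tsum_le_tsum _ (summable_EUW hδ0 hδ1 hu hP0 hP1 hs o)
        (summable_geometric_of_lt_one hδ0 hδ1)
      intro t
      exact mul_le_of_le_one_right (pow_nonneg hδ0 t) (EUW_mem_Icc hu hP0 hP1 hs t o).2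
    calc W δ u P σ o ≤ (1 - δ) * ∑' t : ℕ, δ ^ t :=
          mul_le_mul_of_nonneg_left hle (le_of_lt h1δ)
      _ = 1 := by
          rw [tsum_geometric_of_lt_one hδ0 hδ1]
          field_simp

lemma EUW_congr
    (p₁ p₂ : List ((Fin n → S) × (∀ j, A j)))
    (h : ∀ (j : Fin n) (r : List (S × A j)), σ' j (privH j p₁ ++ r) = σ j (privH j p₂ ++ r)) :
    ∀ t, EUW u P σ' t p₁ = EUW u P σ t p₂ := by
  intro t
  induction t generalizing p₁ p₂ with
  | zero =>
    show (∑ a : ∀ j, A j, (∏ j, σ' j (privH j p₁) (a j)) * u a) = _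
    apply Finset.sum_congr rfl
    intro a _
    congr 1
    apply Finset.prod_congr rfl
    intro j _
    have := h j []
    simp only [List.append_nil] at this
    rw [this]
  | succ t ih =>
    show (∑ a : ∀ j, A j, ∑ sv : Fin n → S,
        (∏ j, σ' j (privH j p₁) (a j)) * P a sv * EUW u P σ' t (p₁ ++ [(sv, a)])) = _
    apply Finset.sum_congr rfl
    intro a _
    apply Finset.sum_congr rfl
    intro sv _
    have hcoef : (∏ j, σ' j (privH j p₁) (a j)) = ∏ j, σ j (privH j p₂) (a j) := by
      apply Finset.prod_congr rfl
      intro j _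
      have := h j []
      simp only [List.append_nil] at this
      rw [this]
    rw [hcoef]
    congr 1
    apply ih
    intro j r
    rw [privH_append, privH_append]
    rw [List.append_assoc, List.append_assoc, List.singleton_append]
    exact h j _

lemma W_congr
    (p₁ p₂ : List ((Fin n → S) × (∀ j, A j)))
    (h : ∀ (j : Fin n) (r : List (S × A j)), σ' j (privH j p₁ ++ r) = σ j (privH j p₂ ++ r)) :
    W δ u P σ' p₁ = W δ u P σ p₂ := by
  unfold W
  congr 1
  apply tsum_congr
  intro t
  rw [EUW_congr p₁ p₂ h t]

lemma outProb_nonneg (hP0 : ∀ a sv, 0 ≤ P a sv) (hs : ∀ j, IsStrategy (σ j)) :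
    ∀ (o past : List ((Fin n → S) × (∀ j, A j))), 0 ≤ outProb P σ past o := by
  intro o
  induction o with
  | nil => intro past; rw [outProb]; norm_num
  | cons x rest ih =>
    intro past
    obtain ⟨sv, a⟩ := x
    rw [outProb]
    exact mul_nonneg (mul_nonneg
      (Finset.prod_nonneg fun j _ => (hs j _).1 _) (hP0 a sv)) (ih _)

lemma W_rec (hδ0 : 0 ≤ δ) (hδ1 : δ < 1)
    (hu : ∀ a, u a ∈ Set.Icc (0:ℝ) 1)
    (hP0 : ∀ a sv, 0 ≤ P a sv) (hP1 : ∀ a, ∑ sv, P a sv = 1)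
    (hs : ∀ j, IsStrategy (σ j)) (o : List ((Fin n → S) × (∀ j, A j))) :
    W δ u P σ o = (1 - δ) * (∑ a : ∀ j, A j, (∏ j, σ j (privH j o) (a j)) * u a)
      + δ * ∑ a : ∀ j, A j, ∑ sv : Fin n → S,
          (∏ j, σ j (privH j o) (a j)) * P a sv * W δ u P σ (o ++ [(sv, a)]) := by
  have hsum : ∀ o', Summable (fun t => δ ^ t * EUW u P σ t o') :=
    fun o' => summable_EUW hδ0 hδ1 hu hP0 hP1 hs o'
  have h0 : ∑' t : ℕ, δ ^ t * EUW u P σ t o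
      = EUW u P σ 0 o + ∑' t : ℕ, δ ^ (t + 1) * EUW u P σ (t + 1) o := by
    rw [Summable.tsum_eq_zero_add (hsum o)]
    simp
  have h1 : ∑' t : ℕ, δ ^ (t + 1) * EUW u P σ (t + 1) o
      = δ * ∑ a : ∀ j, A j, ∑ sv : Fin n → S,
          (∏ j, σ j (privH j o) (a j)) * P a sv
            * ∑' t : ℕ, δ ^ t * EUW u P σ t (o ++ [(sv, a)]) := by
    have step1 : ∀ t : ℕ, δ ^ (t + 1) * EUW u P σ (t + 1) o
        = ∑ a : ∀ j, A j, ∑ sv : Fin n → S,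
            δ * ((∏ j, σ j (privH j o) (a j)) * P a sv
              * (δ ^ t * EUW u P σ t (o ++ [(sv, a)]))) := by
      intro t
      show δ ^ (t+1) * (∑ a : ∀ j, A j, ∑ sv : Fin n → S,
          (∏ j, σ j (privH j o) (a j)) * P a sv * EUW u P σ t (o ++ [(sv, a)])) = _
      rw [Finset.mul_sum]
      apply Finset.sum_congr rfl
      intro a _
      rw [Finset.mul_sum]
      apply Finset.sum_congr rfl
      intro sv _
      ring
    calc ∑' t : ℕ, δ ^ (t + 1) * EUW u P σ (t + 1) o
        = ∑' t : ℕ, ∑ a : ∀ j, A j, ∑ sv : Fin n → S,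
            δ * ((∏ j, σ j (privH j o) (a j)) * P a sv
              * (δ ^ t * EUW u P σ t (o ++ [(sv, a)]))) := tsum_congr step1
      _ = ∑ a : ∀ j, A j, ∑' t : ℕ, ∑ sv : Fin n → S,
            δ * ((∏ j, σ j (privH j o) (a j)) * P a sv
              * (δ ^ t * EUW u P σ t (o ++ [(sv, a)]))) := by
          apply Summable.tsum_finsetSum
          intro a _
          apply summable_sum
          intro sv _
          exact ((hsum _).mul_left _).mul_left _
      _ = ∑ a : ∀ j, A j, ∑ sv : Fin n → S, ∑' t : ℕ,
            δ * ((∏ j, σ j (privH j o) (a j)) * P a sv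
              * (δ ^ t * EUW u P σ t (o ++ [(sv, a)]))) := by
          apply Finset.sum_congr rfl
          intro a _
          apply Summable.tsum_finsetSum
          intro sv _
          exact ((hsum _).mul_left _).mul_left _
      _ = δ * ∑ a : ∀ j, A j, ∑ sv : Fin n → S,
            (∏ j, σ j (privH j o) (a j)) * P a sv
              * ∑' t : ℕ, δ ^ t * EUW u P σ t (o ++ [(sv, a)]) := by
          rw [Finset.mul_sum]
          apply Finset.sum_congr rfl
          intro a _
          rw [Finset.mul_sum]
          apply Finset.sum_congr rfl
          intro sv _
          rw [tsum_mul_left, tsum_mul_left]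
  have hW : ∀ o', W δ u P σ o' = (1 - δ) * ∑' t : ℕ, δ ^ t * EUW u P σ t o' := fun _ => rfl
  have hinner : ∑ a : ∀ j, A j, ∑ sv : Fin n → S,
      (∏ j, σ j (privH j o) (a j)) * P a sv * W δ u P σ (o ++ [(sv, a)])
      = (1 - δ) * ∑ a : ∀ j, A j, ∑ sv : Fin n → S,
        (∏ j, σ j (privH j o) (a j)) * P a sv
          * ∑' t : ℕ, δ ^ t * EUW u P σ t (o ++ [(sv, a)]) := by
    rw [Finset.mul_sum]
    apply Finset.sum_congr rfl
    intro a _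
    rw [Finset.mul_sum]
    apply Finset.sum_congr rfl
    intro sv _
    rw [hW]
    ring
  have hE0 : EUW u P σ 0 o = ∑ a : ∀ j, A j, (∏ j, σ j (privH j o) (a j)) * u a := rfl
  rw [hW o, h0, h1, hinner, hE0]
  ring

lemma dp_fun (hε : 0 ≤ ε) (hγ : 0 ≤ γ) (hDP : PrivDP ε γ P)
    (hP0 : ∀ a sv, 0 ≤ P a sv) (hP1 : ∀ a, ∑ sv, P a sv = 1)
    (a : ∀ j, A j) (i : Fin n) (b : A i) (f : (Fin n → S) → ℝ)
    (hf : ∀ sv, f sv ∈ Set.Icc (0:ℝ) 1) :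
    ∑ sv, P a sv * f sv ≤ (∑ sv, P (Function.update a i b) sv * f sv) + (ε + γ) := by
  classical
  set P' : (Fin n → S) → ℝ := P (Function.update a i b) with hP'
  have key : ∀ E : Finset (Fin n → S),
      Real.exp (-ε) * (∑ sv ∈ E, P a sv) - γ ≤ ∑ sv ∈ E, P' sv := by
    intro E
    have h := (hDP (Function.update a i b) i (a i) E).1
    rwa [Function.update_idem, Function.update_eq_self] at h
  set Em : Finset (Fin n → S) :=
    Finset.univ.filter (fun sv => P' sv - Real.exp (-ε) * P a sv < 0) with hEm
  have hmain : Real.exp (-ε) * (∑ sv, P a sv * f sv) - γ ≤ ∑ sv, P' sv * f sv := by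
    have e1 : ∑ sv, P' sv * f sv - Real.exp (-ε) * ∑ sv, P a sv * f sv
        = ∑ sv, (P' sv - Real.exp (-ε) * P a sv) * f sv := by
      rw [Finset.mul_sum, ← Finset.sum_sub_distrib]
      apply Finset.sum_congr rfl
      intro sv _
      ring
    have e2 : ∑ sv ∈ Em, (P' sv - Real.exp (-ε) * P a sv) * f sv
        ≤ ∑ sv, (P' sv - Real.exp (-ε) * P a sv) * f sv := by
      apply Finset.sum_le_sum_of_subset_of_nonneg (Finset.subset_univ _)
      intro sv _ hsv
      rw [hEm] at hsv
      simp only [Finset.mem_filter, Finset.mem_univ, true_and, not_lt] at hsv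
      exact mul_nonneg (by linarith [hsv]) (hf sv).1
    have e3 : ∑ sv ∈ Em, (P' sv - Real.exp (-ε) * P a sv)
        ≤ ∑ sv ∈ Em, (P' sv - Real.exp (-ε) * P a sv) * f sv := by
      apply Finset.sum_le_sum
      intro sv hsv
      rw [hEm] at hsv
      simp only [Finset.mem_filter, Finset.mem_univ, true_and] at hsv
      nlinarith [(hf sv).1, (hf sv).2]
    have e4 : -γ ≤ ∑ sv ∈ Em, (P' sv - Real.exp (-ε) * P a sv) := by
      have := key Em
      rw [Finset.sum_sub_distrib, ← Finset.mul_sum]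
      linarith
    linarith
  have hfle : ∑ sv, P a sv * f sv ≤ 1 := by
    calc ∑ sv, P a sv * f sv ≤ ∑ sv, P a sv * 1 := by
          apply Finset.sum_le_sum
          intro sv _
          exact mul_le_mul_of_nonneg_left (hf sv).2 (hP0 a sv)
      _ = 1 := by simp only [mul_one]; exact hP1 a
  have hfge : 0 ≤ ∑ sv, P a sv * f sv :=
    Finset.sum_nonneg fun sv _ => mul_nonneg (hP0 a sv) (hf sv).1
  have hexp : 1 - ε ≤ Real.exp (-ε) := by
    have := Real.add_one_le_exp (-ε)
    linarith
  have hexple : Real.exp (-ε) ≤ 1 := by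
    rw [Real.exp_le_one_iff]
    linarith
  nlinarith [hmain]

lemma list_get_mid {α : Type*} : ∀ (l : List α) (x : α) (r : List α),
    (l ++ x :: r).get ⟨l.length, by simp⟩ = x := by
  intro l
  induction l with
  | nil => intro x r; rfl
  | cons y l ih => intro x r; exact ih x r

lemma list_set_mid {α : Type*} : ∀ (l : List α) (x y : α) (r : List α),
    (l ++ x :: r).set l.length y = l ++ y :: r := by
  intro l
  induction l with
  | nil => intro x y r; rfl
  | cons z l ih =>
    intro x y r
    show z :: ((l ++ x :: r).set l.length y) = _
    rw [ih]
    rfl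

lemma list_take_mid {α : Type*} : ∀ (l : List α) (x : α) (r : List α),
    (l ++ x :: r).take l.length = l := by
  intro l
  induction l with
  | nil => intro x r; rfl
  | cons z l ih =>
    intro x r
    show z :: ((l ++ x :: r).take l.length) = _
    rw [ih]

/-- One-shot deviation strategy: at private history `H` play `b`; at histories strictly
extending `H`, mimic `σi` pretending the period-`|H|` action was `c0`. -/
noncomputable def devStrat (i : Fin n) (H : List (S × A i)) (b c0 : A i)
    (σi : List (S × A i) → A i → ℝ) : List (S × A i) → A i → ℝ := fun h =>
  if hl : H.length < h.length then
    (if h.take H.length = H then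
      σi (h.set H.length ((h.get ⟨H.length, hl⟩).1, c0))
    else σi h)
  else if h = H then pureAct i b else σi h

lemma devStrat_isStrategy (i : Fin n) (H : List (S × A i)) (b c0 : A i)
    (σi : List (S × A i) → A i → ℝ) (hs : IsStrategy σi) :
    IsStrategy (devStrat i H b c0 σi) := by
  intro h
  unfold devStrat
  split
  · split
    · exact hs _
    · exact hs _
  · split
    · constructor
      · intro a
        unfold pureAct
        split <;> norm_num
      · simp [pureAct]
    · exact hs _

lemma devStrat_at_H (i : Fin n) (H : List (S × A i)) (b c0 : A i)
    (σi : List (S × A i) → A i → ℝ) :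
    devStrat i H b c0 σi H = pureAct i b := by
  unfold devStrat
  rw [dif_neg (lt_irrefl H.length), if_pos rfl]

lemma devStrat_after (i : Fin n) (H : List (S × A i)) (b c0 : A i)
    (σi : List (S × A i) → A i → ℝ) (s : S) (r : List (S × A i)) :
    devStrat i H b c0 σi ((H ++ [(s, b)]) ++ r) = σi ((H ++ [(s, c0)]) ++ r) := by
  have hform : (H ++ [(s, b)]) ++ r = H ++ (s, b) :: r := by
    rw [List.append_assoc, List.singleton_append]
  have hform' : H ++ (s, c0) :: r = (H ++ [(s, c0)]) ++ r := by
    rw [List.append_assoc, List.singleton_append]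
  rw [hform]
  have hl : H.length < (H ++ (s, b) :: r).length := by
    simp
  unfold devStrat
  rw [dif_pos hl, if_pos (list_take_mid H _ r), list_get_mid H _ r, list_set_mid H _ _ r, hform']

lemma key_split (i : Fin n) (w : ∀ j, A j → ℝ) (hw : ∑ x, w i x = 1)
    (G : (∀ j, A j) → ℝ) :
    ∑ a : ∀ j, A j, (∏ j, w j (a j)) * G a
    = ∑ x : A i, w i x * ∑ a : ∀ j, A j, (∏ j, w j (a j)) * G (Function.update a i x) := by
  classical
  have hdec : ∀ a : ∀ j, A j, (∏ j, w j (a j))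
      = w i (a i) * ∏ j ∈ Finset.univ.erase i, w j (a j) :=
    fun a => (Finset.mul_prod_erase Finset.univ _ (Finset.mem_univ i)).symm
  calc ∑ a : ∀ j, A j, (∏ j, w j (a j)) * G a
      = (∑ x : A i, w i x) * ∑ a : ∀ j, A j, (∏ j, w j (a j)) * G a := by rw [hw, one_mul]
    _ = ∑ x : A i, ∑ a : ∀ j, A j,
        w i x * w i (a i) * (∏ j ∈ Finset.univ.erase i, w j (a j)) * G a := by
        rw [Finset.sum_mul]
        apply Finset.sum_congr rfl
        intro x _
        rw [Finset.mul_sum]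
        apply Finset.sum_congr rfl
        intro a _
        rw [hdec a]
        ring
    _ = ∑ x : A i, ∑ a : ∀ j, A j,
        w i (a i) * w i x * (∏ j ∈ Finset.univ.erase i, w j (a j))
          * G (Function.update a i x) := swap_sum i (w i) (w i) w G
    _ = ∑ x : A i, w i x * ∑ a : ∀ j, A j, (∏ j, w j (a j)) * G (Function.update a i x) := by
        apply Finset.sum_congr rfl
        intro x _
        rw [Finset.mul_sum]
        apply Finset.sum_congr rfl
        intro a _
        rw [hdec a]
        ring

lemma margin (i : Fin n) (w w' : ∀ j, A j → ℝ)
    (hagree : ∀ j, j ≠ i → w j = w' j)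
    (hwi : ∑ x, w i x = 1) (hw'i : ∑ x, w' i x = 1)
    (K : (∀ j, A j) → ℝ) (hK : ∀ a x, K (Function.update a i x) = K a) :
    ∑ a : ∀ j, A j, (∏ j, w' j (a j)) * K a = ∑ a : ∀ j, A j, (∏ j, w j (a j)) * K a := by
  classical
  have herase : ∀ a : ∀ j, A j, ∏ j ∈ Finset.univ.erase i, w' j (a j)
      = ∏ j ∈ Finset.univ.erase i, w j (a j) := by
    intro a
    apply Finset.prod_congr rfl
    intro j hj
    rw [hagree j (Finset.ne_of_mem_erase hj)]
  have hdec : ∀ (v : ∀ j, A j → ℝ) (a : ∀ j, A j), (∏ j, v j (a j))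
      = v i (a i) * ∏ j ∈ Finset.univ.erase i, v j (a j) :=
    fun v a => (Finset.mul_prod_erase Finset.univ _ (Finset.mem_univ i)).symm
  calc ∑ a : ∀ j, A j, (∏ j, w' j (a j)) * K a
      = (∑ x : A i, w i x) * ∑ a : ∀ j, A j, (∏ j, w' j (a j)) * K a := by rw [hwi, one_mul]
    _ = ∑ x : A i, ∑ a : ∀ j, A j,
        w i x * w' i (a i) * (∏ j ∈ Finset.univ.erase i, w j (a j)) * K a := by
        rw [Finset.sum_mul]
        apply Finset.sum_congr rfl
        intro x _
        rw [Finset.mul_sum]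
        apply Finset.sum_congr rfl
        intro a _
        rw [hdec w' a, herase a]
        ring
    _ = ∑ x : A i, ∑ a : ∀ j, A j,
        w i (a i) * w' i x * (∏ j ∈ Finset.univ.erase i, w j (a j))
          * K (Function.update a i x) := swap_sum i (w' i) (w i) w K
    _ = (∑ x : A i, w' i x) * ∑ a : ∀ j, A j, (∏ j, w j (a j)) * K a := by
        rw [Finset.sum_mul]
        apply Finset.sum_congr rfl
        intro x _
        rw [Finset.mul_sum]
        apply Finset.sum_congr rfl
        intro a _
        rw [hK a x, hdec w a]
        ring
    _ = ∑ a : ∀ j, A j, (∏ j, w j (a j)) * K a := by rw [hw'i, one_mul]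
end RepeatedGame

/-- **Anti-folk theorem for sequential equilibria under private monitoring (Theorem 4 of
the paper).**  Fix a repeated game with discount factor `δ ∈ [0,1)`, stage payoffs in
`[0,1]`, and a private monitoring structure satisfying `(ε,γ)`-differential privacy and
no observable deviations.  Let `σ` be a sequential equilibrium.  Then for every vector of
private histories occurring with positive probability (equivalently, every positive
probability outcome prefix `o`), the distribution on period-`t` action profiles
`(σ₁(h₁),…,σₙ(hₙ))`, with players' private histories as correlating signals, is an
`η`-approximate correlated equilibrium of the stage game with `η = (δ/(1-δ))·(ε+γ)`:
for every player `i` and every action `b`, the conditional expected gain from deviating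
to `b`, given player `i`'s private history `privH i o`, is at most `η`. -/
theorem seqEq_private_approx_stage_corr {n : ℕ} {A : Fin n → Type*}
    [∀ i, Fintype (A i)] [∀ i, DecidableEq (A i)] {S : Type*} [Fintype S] [DecidableEq S]
    (δ : ℝ) (hδ0 : 0 ≤ δ) (hδ1 : δ < 1)
    (u : ∀ i : Fin n, (∀ j, A j) → ℝ) (hu : ∀ i a, u i a ∈ Set.Icc (0 : ℝ) 1)
    (P : (∀ j, A j) → (Fin n → S) → ℝ)
    (hP0 : ∀ a sv, 0 ≤ P a sv) (hP1 : ∀ a, ∑ sv, P a sv = 1)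
    (hNOD : NoObsDevPriv P)
    (ε γ : ℝ) (hε : 0 ≤ ε) (hγ : 0 ≤ γ) (hDP : PrivDP ε γ P)
    (σ : ∀ i : Fin n, List (S × A i) → A i → ℝ) (hσ : IsSeqEq δ u P σ)
    (o : List ((Fin n → S) × (∀ j, A j))) (hpos : 0 < outProb P σ [] o) :
    ∀ (i : Fin n) (b : A i),
      (∑ m : Fin o.length → ((Fin n → S) × (∀ j, A j)),
          consInd i o m * outProb P σ [] (List.ofFn m) *
            (expPay (u i)
                (Function.update (fun j => σ j (privH j (List.ofFn m))) i (pureAct i b)) -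
              expPay (u i) (fun j => σ j (privH j (List.ofFn m))))) /
        (∑ m : Fin o.length → ((Fin n → S) × (∀ j, A j)),
          consInd i o m * outProb P σ [] (List.ofFn m))
      ≤ δ / (1 - δ) * (ε + γ) := by
  intro i b
  classical
  obtain ⟨hstrat, β, hβ0, hβz, hβ1, hβBayes, hβBR⟩ := hσ
  have h1δ : (0:ℝ) < 1 - δ := by linarith
  have hout0 : ∀ m : Fin o.length → ((Fin n → S) × (∀ j, A j)),
      0 ≤ outProb P σ [] (List.ofFn m) := fun m => outProb_nonneg hP0 hstrat _ _
  have hci0 : ∀ m : Fin o.length → ((Fin n → S) × (∀ j, A j)), 0 ≤ consInd i o m := by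
    intro m
    unfold consInd
    split <;> norm_num
  have hDpos : 0 < ∑ m' : Fin o.length → ((Fin n → S) × (∀ j, A j)),
      consInd i o m' * outProb P σ [] (List.ofFn m') := by
    apply Finset.sum_pos'
    · intro m _
      exact mul_nonneg (hci0 m) (hout0 m)
    · refine ⟨fun τ => o.get τ, Finset.mem_univ _, ?_⟩
      have h1 : consInd i o (fun τ => o.get τ) = 1 := by
        unfold consInd
        rw [if_pos]
        intro τ
        exact ⟨rfl, rfl⟩
      have h2 : List.ofFn (fun τ => o.get τ) = o := List.ofFn_get o
      rw [h1, one_mul, h2]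
      exact hpos
  have hcons : ∀ m : Fin o.length → ((Fin n → S) × (∀ j, A j)), β i o m ≠ 0 →
      privH i (List.ofFn m) = privH i o := by
    intro m hm
    have hind : ∀ τ, (m τ).1 i = (o.get τ).1 i ∧ (m τ).2 i = (o.get τ).2 i := by
      by_contra hc
      apply hm
      apply hβz
      unfold consInd
      rw [if_neg hc]
    have e1 : privH i (List.ofFn m)
        = List.ofFn (fun τ => ((m τ).1 i, (m τ).2 i)) := by
      unfold privH
      rw [List.map_ofFn]
      rfl
    have e2 : privH i o = List.ofFn (fun τ => ((o.get τ).1 i, (o.get τ).2 i)) := by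
      conv_lhs => rw [← List.ofFn_get o]
      unfold privH
      rw [List.map_ofFn]
      rfl
    rw [e1, e2]
    congr 1
    funext τ
    rw [(hind τ).1, (hind τ).2]
  -- choose the fictitious action c0 as a maximizer
  obtain ⟨c0, hc0⟩ : ∃ c0 : A i, ∀ x : A i,
      (∑ m : Fin o.length → ((Fin n → S) × (∀ j, A j)), β i o m *
        ∑ a : ∀ j, A j, (∏ j, σ j (privH j (List.ofFn m)) (a j)) *
          ∑ sv : Fin n → S, P (Function.update a i b) sv *
            W δ (u i) P σ (List.ofFn m ++ [(sv, Function.update a i x)]))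
      ≤ ∑ m : Fin o.length → ((Fin n → S) × (∀ j, A j)), β i o m *
        ∑ a : ∀ j, A j, (∏ j, σ j (privH j (List.ofFn m)) (a j)) *
          ∑ sv : Fin n → S, P (Function.update a i b) sv *
            W δ (u i) P σ (List.ofFn m ++ [(sv, Function.update a i c0)]) := by
    obtain ⟨c0, -, hmax⟩ := Finset.exists_max_image Finset.univ
      (fun x : A i => ∑ m : Fin o.length → ((Fin n → S) × (∀ j, A j)), β i o m *
        ∑ a : ∀ j, A j, (∏ j, σ j (privH j (List.ofFn m)) (a j)) *
          ∑ sv : Fin n → S, P (Function.update a i b) sv *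
            W δ (u i) P σ (List.ofFn m ++ [(sv, Function.update a i x)]))
      ⟨b, Finset.mem_univ b⟩
    exact ⟨c0, fun x => hmax x (Finset.mem_univ x)⟩
  -- the one-shot deviation strategy
  set σi' : List (S × A i) → A i → ℝ := devStrat i (privH i o) b c0 (σ i) with hσi'def
  have hσi'S : IsStrategy σi' := devStrat_isStrategy _ _ _ _ _ (hstrat i)
  have hs' : ∀ j, IsStrategy (Function.update σ i σi' j) := by
    intro j
    by_cases hji : j = i
    · subst hji
      rw [Function.update_self]
      exact hσi'S
    · rw [Function.update_of_ne hji]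
      exact hstrat j
  -- at a consistent history, the deviation plays the point mass on b
  have hdev_at : ∀ m : Fin o.length → ((Fin n → S) × (∀ j, A j)), β i o m ≠ 0 →
      Function.update σ i σi' i (privH i (List.ofFn m)) = pureAct i b := by
    intro m hm
    rw [Function.update_self, hcons m hm, hσi'def, devStrat_at_H]
  -- the mimicking property after the deviation
  have hmimic : ∀ m : Fin o.length → ((Fin n → S) × (∀ j, A j)), β i o m ≠ 0 →
      ∀ (a : ∀ j, A j), a i = b → ∀ sv : Fin n → S,
      W δ (u i) P (Function.update σ i σi') (List.ofFn m ++ [(sv, a)])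
        = W δ (u i) P σ (List.ofFn m ++ [(sv, Function.update a i c0)]) := by
    intro m hm a hab sv
    apply W_congr
    intro j r
    by_cases hji : j = i
    · subst hji
      rw [Function.update_self]
      rw [privH_append, privH_append, hcons m hm]
      simp only [Function.update_self]
      rw [hab, hσi'def]
      exact devStrat_after j (privH j o) b c0 (σ j) (sv j) r
    · rw [Function.update_of_ne hji]
      rw [privH_append, privH_append]
      simp only [Function.update_of_ne hji]
  -- the best-reply inequality
  have hBR := hβBR i o σi' hσi'S
  -- recursive decompositions of the value
  have hrecσ : ∀ m : Fin o.length → ((Fin n → S) × (∀ j, A j)),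
      W δ (u i) P σ (List.ofFn m)
      = (1 - δ) * (∑ a : ∀ j, A j, (∏ j, σ j (privH j (List.ofFn m)) (a j)) * u i a)
        + δ * ∑ a : ∀ j, A j, ∑ sv : Fin n → S,
            (∏ j, σ j (privH j (List.ofFn m)) (a j)) * P a sv
              * W δ (u i) P σ (List.ofFn m ++ [(sv, a)]) :=
    fun m => W_rec hδ0 hδ1 (hu i) hP0 hP1 hstrat _
  have hrecσ' : ∀ m : Fin o.length → ((Fin n → S) × (∀ j, A j)),
      W δ (u i) P (Function.update σ i σi') (List.ofFn m)
      = (1 - δ) * (∑ a : ∀ j, A j,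
            (∏ j, Function.update σ i σi' j (privH j (List.ofFn m)) (a j)) * u i a)
        + δ * ∑ a : ∀ j, A j, ∑ sv : Fin n → S,
            (∏ j, Function.update σ i σi' j (privH j (List.ofFn m)) (a j)) * P a sv
              * W δ (u i) P (Function.update σ i σi') (List.ofFn m ++ [(sv, a)]) :=
    fun m => W_rec hδ0 hδ1 (hu i) hP0 hP1 hs' _
  -- expansion helper
  have expand : ∀ (E C : (Fin o.length → ((Fin n → S) × (∀ j, A j))) → ℝ),
      ∑ m : Fin o.length → ((Fin n → S) × (∀ j, A j)),
        β i o m * ((1 - δ) * E m + δ * C m)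
      = (1 - δ) * (∑ m : Fin o.length → ((Fin n → S) × (∀ j, A j)), β i o m * E m)
        + δ * ∑ m : Fin o.length → ((Fin n → S) × (∀ j, A j)), β i o m * C m := by
    intro E C
    rw [Finset.mul_sum, Finset.mul_sum, ← Finset.sum_add_distrib]
    apply Finset.sum_congr rfl
    intro m _
    ring
  
  -- pull the coefficient out of the inner signal sum
  have hpull : ∀ (c : ℝ) (f g : (Fin n → S) → ℝ),
      (∑ sv : Fin n → S, c * f sv * g sv) = c * ∑ sv : Fin n → S, f sv * g sv := by
    intro c f g
    rw [Finset.mul_sum]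
    apply Finset.sum_congr rfl
    intro sv _
    rw [mul_assoc]
  -- (A)  the deviation continuation equals the Φ(c0) expression
  have hC'eq : ∑ m : Fin o.length → ((Fin n → S) × (∀ j, A j)), β i o m *
        (∑ a : ∀ j, A j, ∑ sv : Fin n → S,
          (∏ j, Function.update σ i σi' j (privH j (List.ofFn m)) (a j)) * P a sv
            * W δ (u i) P (Function.update σ i σi') (List.ofFn m ++ [(sv, a)]))
      = ∑ m : Fin o.length → ((Fin n → S) × (∀ j, A j)), β i o m *
        ∑ a : ∀ j, A j, (∏ j, σ j (privH j (List.ofFn m)) (a j)) *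
          ∑ sv : Fin n → S, P (Function.update a i b) sv *
            W δ (u i) P σ (List.ofFn m ++ [(sv, Function.update a i c0)]) := by
    apply Finset.sum_congr rfl
    intro m _
    by_cases hm : β i o m = 0
    · rw [hm, zero_mul, zero_mul]
    congr 1
    calc ∑ a : ∀ j, A j, ∑ sv : Fin n → S,
          (∏ j, Function.update σ i σi' j (privH j (List.ofFn m)) (a j)) * P a sv
            * W δ (u i) P (Function.update σ i σi') (List.ofFn m ++ [(sv, a)])
        = ∑ a : ∀ j, A j,
          (∏ j, Function.update σ i σi' j (privH j (List.ofFn m)) (a j)) *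
            (∑ sv : Fin n → S, P (Function.update a i b) sv *
              W δ (u i) P σ (List.ofFn m ++ [(sv, Function.update a i c0)])) := by
          apply Finset.sum_congr rfl
          intro a _
          by_cases hab : a i = b
          · rw [hpull]
            congr 1
            apply Finset.sum_congr rfl
            intro sv _
            have hupd : Function.update a i b = a := by
              rw [← hab]
              exact Function.update_eq_self i a
            rw [hupd, hmimic m hm a hab sv]
          · have hz : (∏ j, Function.update σ i σi' j (privH j (List.ofFn m)) (a j)) = 0 := by
              apply Finset.prod_eq_zero (Finset.mem_univ i)
              rw [hdev_at m hm]
              unfold pureAct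
              rw [if_neg hab]
            rw [hz]
            simp
      _ = ∑ a : ∀ j, A j, (∏ j, σ j (privH j (List.ofFn m)) (a j)) *
            (∑ sv : Fin n → S, P (Function.update a i b) sv *
              W δ (u i) P σ (List.ofFn m ++ [(sv, Function.update a i c0)])) := by
          apply margin i (fun j => σ j (privH j (List.ofFn m)))
            (fun j => Function.update σ i σi' j (privH j (List.ofFn m)))
          · intro j hji
            rw [Function.update_of_ne hji]
          · exact (hstrat i _).2
          · rw [hdev_at m hm]
            simp [pureAct]
          · intro a x
            apply Finset.sum_congr rfl
            intro sv _
            rw [Function.update_idem, Function.update_idem]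
  -- (B)  DP bound on the equilibrium continuation
  have hCle : ∑ m : Fin o.length → ((Fin n → S) × (∀ j, A j)), β i o m *
        (∑ a : ∀ j, A j, ∑ sv : Fin n → S,
          (∏ j, σ j (privH j (List.ofFn m)) (a j)) * P a sv
            * W δ (u i) P σ (List.ofFn m ++ [(sv, a)]))
      ≤ (∑ m : Fin o.length → ((Fin n → S) × (∀ j, A j)), β i o m *
          ∑ a : ∀ j, A j, (∏ j, σ j (privH j (List.ofFn m)) (a j)) *
            (∑ sv : Fin n → S, P (Function.update a i b) sv *
              W δ (u i) P σ (List.ofFn m ++ [(sv, a)]))) + (ε + γ) := by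
    have hperm : ∀ m : Fin o.length → ((Fin n → S) × (∀ j, A j)),
        (∑ a : ∀ j, A j, ∑ sv : Fin n → S,
          (∏ j, σ j (privH j (List.ofFn m)) (a j)) * P a sv
            * W δ (u i) P σ (List.ofFn m ++ [(sv, a)]))
        ≤ (∑ a : ∀ j, A j, (∏ j, σ j (privH j (List.ofFn m)) (a j)) *
            (∑ sv : Fin n → S, P (Function.update a i b) sv *
              W δ (u i) P σ (List.ofFn m ++ [(sv, a)]))) + (ε + γ) := by
      intro m
      have e1 : (∑ a : ∀ j, A j, ∑ sv : Fin n → S,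
          (∏ j, σ j (privH j (List.ofFn m)) (a j)) * P a sv
            * W δ (u i) P σ (List.ofFn m ++ [(sv, a)]))
          = ∑ a : ∀ j, A j, (∏ j, σ j (privH j (List.ofFn m)) (a j)) *
            (∑ sv : Fin n → S, P a sv * W δ (u i) P σ (List.ofFn m ++ [(sv, a)])) := by
        apply Finset.sum_congr rfl
        intro a _
        rw [hpull]
      rw [e1]
      have e2 : ∀ a : ∀ j, A j,
          (∏ j, σ j (privH j (List.ofFn m)) (a j)) *
            (∑ sv : Fin n → S, P a sv * W δ (u i) P σ (List.ofFn m ++ [(sv, a)]))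
          ≤ (∏ j, σ j (privH j (List.ofFn m)) (a j)) *
            ((∑ sv : Fin n → S, P (Function.update a i b) sv *
              W δ (u i) P σ (List.ofFn m ++ [(sv, a)])) + (ε + γ)) := by
        intro a
        apply mul_le_mul_of_nonneg_left
        · exact dp_fun hε hγ hDP hP0 hP1 a i b _
            (fun sv => W_mem_Icc hδ0 hδ1 (hu i) hP0 hP1 hstrat _)
        · exact Finset.prod_nonneg fun j _ => (hstrat j _).1 _
      calc ∑ a : ∀ j, A j, (∏ j, σ j (privH j (List.ofFn m)) (a j)) *
            (∑ sv : Fin n → S, P a sv * W δ (u i) P σ (List.ofFn m ++ [(sv, a)]))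
          ≤ ∑ a : ∀ j, A j, (∏ j, σ j (privH j (List.ofFn m)) (a j)) *
            ((∑ sv : Fin n → S, P (Function.update a i b) sv *
              W δ (u i) P σ (List.ofFn m ++ [(sv, a)])) + (ε + γ)) :=
            Finset.sum_le_sum fun a _ => e2 a
        _ = (∑ a : ∀ j, A j, (∏ j, σ j (privH j (List.ofFn m)) (a j)) *
            (∑ sv : Fin n → S, P (Function.update a i b) sv *
              W δ (u i) P σ (List.ofFn m ++ [(sv, a)])))
            + (∑ a : ∀ j, A j, (∏ j, σ j (privH j (List.ofFn m)) (a j))) * (ε + γ) := by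
            rw [Finset.sum_mul, ← Finset.sum_add_distrib]
            apply Finset.sum_congr rfl
            intro a _
            ring
        _ = (∑ a : ∀ j, A j, (∏ j, σ j (privH j (List.ofFn m)) (a j)) *
            (∑ sv : Fin n → S, P (Function.update a i b) sv *
              W δ (u i) P σ (List.ofFn m ++ [(sv, a)]))) + (ε + γ) := by
            rw [sum_prod_eq_one _ (fun j => (hstrat j _).2), one_mul]
    calc ∑ m : Fin o.length → ((Fin n → S) × (∀ j, A j)), β i o m *
          (∑ a : ∀ j, A j, ∑ sv : Fin n → S,
            (∏ j, σ j (privH j (List.ofFn m)) (a j)) * P a sv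
              * W δ (u i) P σ (List.ofFn m ++ [(sv, a)]))
        ≤ ∑ m : Fin o.length → ((Fin n → S) × (∀ j, A j)), β i o m *
          ((∑ a : ∀ j, A j, (∏ j, σ j (privH j (List.ofFn m)) (a j)) *
            (∑ sv : Fin n → S, P (Function.update a i b) sv *
              W δ (u i) P σ (List.ofFn m ++ [(sv, a)]))) + (ε + γ)) :=
          Finset.sum_le_sum fun m _ => mul_le_mul_of_nonneg_left (hperm m) (hβ0 i o m)
      _ = (∑ m : Fin o.length → ((Fin n → S) × (∀ j, A j)), β i o m *
          (∑ a : ∀ j, A j, (∏ j, σ j (privH j (List.ofFn m)) (a j)) *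
            (∑ sv : Fin n → S, P (Function.update a i b) sv *
              W δ (u i) P σ (List.ofFn m ++ [(sv, a)]))))
          + (∑ m : Fin o.length → ((Fin n → S) × (∀ j, A j)), β i o m) * (ε + γ) := by
          rw [Finset.sum_mul, ← Finset.sum_add_distrib]
          apply Finset.sum_congr rfl
          intro m _
          ring
      _ = _ := by rw [hβ1 i o, one_mul]
  -- (C)  splitting off player i's action and using the maximality of c0
  have hCsplit : ∑ m : Fin o.length → ((Fin n → S) × (∀ j, A j)), β i o m *
        (∑ a : ∀ j, A j, (∏ j, σ j (privH j (List.ofFn m)) (a j)) *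
          (∑ sv : Fin n → S, P (Function.update a i b) sv *
            W δ (u i) P σ (List.ofFn m ++ [(sv, a)])))
      ≤ ∑ m : Fin o.length → ((Fin n → S) × (∀ j, A j)), β i o m *
        ∑ a : ∀ j, A j, (∏ j, σ j (privH j (List.ofFn m)) (a j)) *
          ∑ sv : Fin n → S, P (Function.update a i b) sv *
            W δ (u i) P σ (List.ofFn m ++ [(sv, Function.update a i c0)]) := by
    have hkey : ∀ m : Fin o.length → ((Fin n → S) × (∀ j, A j)), β i o m ≠ 0 →
        (∑ a : ∀ j, A j, (∏ j, σ j (privH j (List.ofFn m)) (a j)) *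
          (∑ sv : Fin n → S, P (Function.update a i b) sv *
            W δ (u i) P σ (List.ofFn m ++ [(sv, a)])))
        = ∑ x : A i, σ i (privH i o) x *
            ∑ a : ∀ j, A j, (∏ j, σ j (privH j (List.ofFn m)) (a j)) *
              ∑ sv : Fin n → S, P (Function.update a i b) sv *
                W δ (u i) P σ (List.ofFn m ++ [(sv, Function.update a i x)]) := by
      intro m hm
      have := key_split i (fun j => σ j (privH j (List.ofFn m))) ((hstrat i _).2)
        (fun a => ∑ sv : Fin n → S, P (Function.update a i b) sv *
          W δ (u i) P σ (List.ofFn m ++ [(sv, a)]))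
      rw [this]
      apply Finset.sum_congr rfl
      intro x _
      rw [hcons m hm]
      congr 1
      apply Finset.sum_congr rfl
      intro a _
      congr 1
      apply Finset.sum_congr rfl
      intro sv _
      rw [Function.update_idem]
    calc ∑ m : Fin o.length → ((Fin n → S) × (∀ j, A j)), β i o m *
          (∑ a : ∀ j, A j, (∏ j, σ j (privH j (List.ofFn m)) (a j)) *
            (∑ sv : Fin n → S, P (Function.update a i b) sv *
              W δ (u i) P σ (List.ofFn m ++ [(sv, a)])))
        = ∑ m : Fin o.length → ((Fin n → S) × (∀ j, A j)), β i o m *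
          ∑ x : A i, σ i (privH i o) x *
            ∑ a : ∀ j, A j, (∏ j, σ j (privH j (List.ofFn m)) (a j)) *
              ∑ sv : Fin n → S, P (Function.update a i b) sv *
                W δ (u i) P σ (List.ofFn m ++ [(sv, Function.update a i x)]) := by
          apply Finset.sum_congr rfl
          intro m _
          by_cases hm : β i o m = 0
          · rw [hm, zero_mul, zero_mul]
          · rw [hkey m hm]
      _ = ∑ x : A i, σ i (privH i o) x *
            ∑ m : Fin o.length → ((Fin n → S) × (∀ j, A j)), β i o m *
              ∑ a : ∀ j, A j, (∏ j, σ j (privH j (List.ofFn m)) (a j)) *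
                ∑ sv : Fin n → S, P (Function.update a i b) sv *
                  W δ (u i) P σ (List.ofFn m ++ [(sv, Function.update a i x)]) := by
          calc ∑ m : Fin o.length → ((Fin n → S) × (∀ j, A j)), β i o m *
                ∑ x : A i, σ i (privH i o) x *
                  ∑ a : ∀ j, A j, (∏ j, σ j (privH j (List.ofFn m)) (a j)) *
                    ∑ sv : Fin n → S, P (Function.update a i b) sv *
                      W δ (u i) P σ (List.ofFn m ++ [(sv, Function.update a i x)])
              = ∑ m : Fin o.length → ((Fin n → S) × (∀ j, A j)), ∑ x : A i,
                  β i o m * (σ i (privH i o) x *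
                    ∑ a : ∀ j, A j, (∏ j, σ j (privH j (List.ofFn m)) (a j)) *
                      ∑ sv : Fin n → S, P (Function.update a i b) sv *
                        W δ (u i) P σ (List.ofFn m ++ [(sv, Function.update a i x)])) := by
                apply Finset.sum_congr rfl
                intro m _
                rw [Finset.mul_sum]
            _ = ∑ x : A i, ∑ m : Fin o.length → ((Fin n → S) × (∀ j, A j)),
                  β i o m * (σ i (privH i o) x *
                    ∑ a : ∀ j, A j, (∏ j, σ j (privH j (List.ofFn m)) (a j)) *
                      ∑ sv : Fin n → S, P (Function.update a i b) sv *
                        W δ (u i) P σ (List.ofFn m ++ [(sv, Function.update a i x)])) :=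
                Finset.sum_comm
            _ = ∑ x : A i, σ i (privH i o) x *
                  ∑ m : Fin o.length → ((Fin n → S) × (∀ j, A j)), β i o m *
                    ∑ a : ∀ j, A j, (∏ j, σ j (privH j (List.ofFn m)) (a j)) *
                      ∑ sv : Fin n → S, P (Function.update a i b) sv *
                        W δ (u i) P σ (List.ofFn m ++ [(sv, Function.update a i x)]) := by
                apply Finset.sum_congr rfl
                intro x _
                rw [Finset.mul_sum]
                apply Finset.sum_congr rfl
                intro m _
                ring
      _ ≤ ∑ x : A i, σ i (privH i o) x *
            ∑ m : Fin o.length → ((Fin n → S) × (∀ j, A j)), β i o m *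
              ∑ a : ∀ j, A j, (∏ j, σ j (privH j (List.ofFn m)) (a j)) *
                ∑ sv : Fin n → S, P (Function.update a i b) sv *
                  W δ (u i) P σ (List.ofFn m ++ [(sv, Function.update a i c0)]) := by
          apply Finset.sum_le_sum
          intro x _
          exact mul_le_mul_of_nonneg_left (hc0 x) ((hstrat i _).1 x)
      _ = _ := by
          rw [← Finset.sum_mul, (hstrat i _).2, one_mul]
  
  -- rewrite the best-reply inequality via the recursion
  have hL : ∑ m : Fin o.length → ((Fin n → S) × (∀ j, A j)),
        β i o m * W δ (u i) P (Function.update σ i σi') (List.ofFn m)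
      = (1 - δ) * (∑ m : Fin o.length → ((Fin n → S) × (∀ j, A j)), β i o m *
            (∑ a : ∀ j, A j,
              (∏ j, Function.update σ i σi' j (privH j (List.ofFn m)) (a j)) * u i a))
        + δ * ∑ m : Fin o.length → ((Fin n → S) × (∀ j, A j)), β i o m *
            (∑ a : ∀ j, A j, ∑ sv : Fin n → S,
              (∏ j, Function.update σ i σi' j (privH j (List.ofFn m)) (a j)) * P a sv
                * W δ (u i) P (Function.update σ i σi') (List.ofFn m ++ [(sv, a)])) := by
    calc ∑ m : Fin o.length → ((Fin n → S) × (∀ j, A j)),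
          β i o m * W δ (u i) P (Function.update σ i σi') (List.ofFn m)
        = ∑ m : Fin o.length → ((Fin n → S) × (∀ j, A j)), β i o m *
            ((1 - δ) * (∑ a : ∀ j, A j,
              (∏ j, Function.update σ i σi' j (privH j (List.ofFn m)) (a j)) * u i a)
             + δ * ∑ a : ∀ j, A j, ∑ sv : Fin n → S,
              (∏ j, Function.update σ i σi' j (privH j (List.ofFn m)) (a j)) * P a sv
                * W δ (u i) P (Function.update σ i σi') (List.ofFn m ++ [(sv, a)])) :=
          Finset.sum_congr rfl fun m _ => by rw [hrecσ' m]
      _ = _ := expand _ _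
  have hR : ∑ m : Fin o.length → ((Fin n → S) × (∀ j, A j)),
        β i o m * W δ (u i) P σ (List.ofFn m)
      = (1 - δ) * (∑ m : Fin o.length → ((Fin n → S) × (∀ j, A j)), β i o m *
            (∑ a : ∀ j, A j, (∏ j, σ j (privH j (List.ofFn m)) (a j)) * u i a))
        + δ * ∑ m : Fin o.length → ((Fin n → S) × (∀ j, A j)), β i o m *
            (∑ a : ∀ j, A j, ∑ sv : Fin n → S,
              (∏ j, σ j (privH j (List.ofFn m)) (a j)) * P a sv
                * W δ (u i) P σ (List.ofFn m ++ [(sv, a)])) := by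
    calc ∑ m : Fin o.length → ((Fin n → S) × (∀ j, A j)),
          β i o m * W δ (u i) P σ (List.ofFn m)
        = ∑ m : Fin o.length → ((Fin n → S) × (∀ j, A j)), β i o m *
            ((1 - δ) * (∑ a : ∀ j, A j, (∏ j, σ j (privH j (List.ofFn m)) (a j)) * u i a)
             + δ * ∑ a : ∀ j, A j, ∑ sv : Fin n → S,
              (∏ j, σ j (privH j (List.ofFn m)) (a j)) * P a sv
                * W δ (u i) P σ (List.ofFn m ++ [(sv, a)])) :=
          Finset.sum_congr rfl fun m _ => by rw [hrecσ m]
      _ = _ := expand _ _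
  -- identify the one-period gain
  have hgain : ∑ m : Fin o.length → ((Fin n → S) × (∀ j, A j)), β i o m *
        (expPay (u i)
            (Function.update (fun j => σ j (privH j (List.ofFn m))) i (pureAct i b)) -
          expPay (u i) (fun j => σ j (privH j (List.ofFn m))))
      = (∑ m : Fin o.length → ((Fin n → S) × (∀ j, A j)), β i o m *
          (∑ a : ∀ j, A j,
            (∏ j, Function.update σ i σi' j (privH j (List.ofFn m)) (a j)) * u i a))
        - ∑ m : Fin o.length → ((Fin n → S) × (∀ j, A j)), β i o m *
          (∑ a : ∀ j, A j, (∏ j, σ j (privH j (List.ofFn m)) (a j)) * u i a) := by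
    rw [← Finset.sum_sub_distrib]
    apply Finset.sum_congr rfl
    intro m _
    by_cases hm : β i o m = 0
    · rw [hm]
      ring
    · have hE' : (∑ a : ∀ j, A j,
          (∏ j, Function.update σ i σi' j (privH j (List.ofFn m)) (a j)) * u i a)
          = expPay (u i)
              (Function.update (fun j => σ j (privH j (List.ofFn m))) i (pureAct i b)) := by
        unfold expPay
        apply Finset.sum_congr rfl
        intro a _
        congr 1
        apply Finset.prod_congr rfl
        intro j _
        by_cases hji : j = i
        · subst hji
          rw [hdev_at m hm, Function.update_self]
        · rw [Function.update_of_ne hji, Function.update_of_ne hji]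
      have hE : (∑ a : ∀ j, A j, (∏ j, σ j (privH j (List.ofFn m)) (a j)) * u i a)
          = expPay (u i) (fun j => σ j (privH j (List.ofFn m))) := rfl
      rw [← hE', ← hE]
      ring
  -- the main estimate
  have hfinal : ∑ m : Fin o.length → ((Fin n → S) × (∀ j, A j)), β i o m *
        (expPay (u i)
            (Function.update (fun j => σ j (privH j (List.ofFn m))) i (pureAct i b)) -
          expPay (u i) (fun j => σ j (privH j (List.ofFn m))))
      ≤ δ / (1 - δ) * (ε + γ) := by
    rw [hgain, div_mul_eq_mul_div, le_div_iff₀ h1δ]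
    have h1 := hBR
    rw [hL, hR] at h1
    have hCC' : ∑ m : Fin o.length → ((Fin n → S) × (∀ j, A j)), β i o m *
          (∑ a : ∀ j, A j, ∑ sv : Fin n → S,
            (∏ j, σ j (privH j (List.ofFn m)) (a j)) * P a sv
              * W δ (u i) P σ (List.ofFn m ++ [(sv, a)]))
        ≤ (∑ m : Fin o.length → ((Fin n → S) × (∀ j, A j)), β i o m *
            (∑ a : ∀ j, A j, ∑ sv : Fin n → S,
              (∏ j, Function.update σ i σi' j (privH j (List.ofFn m)) (a j)) * P a sv
                * W δ (u i) P (Function.update σ i σi') (List.ofFn m ++ [(sv, a)])))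
          + (ε + γ) := by
      rw [hC'eq]
      calc ∑ m : Fin o.length → ((Fin n → S) × (∀ j, A j)), β i o m *
            (∑ a : ∀ j, A j, ∑ sv : Fin n → S,
              (∏ j, σ j (privH j (List.ofFn m)) (a j)) * P a sv
                * W δ (u i) P σ (List.ofFn m ++ [(sv, a)]))
          ≤ (∑ m : Fin o.length → ((Fin n → S) × (∀ j, A j)), β i o m *
              ∑ a : ∀ j, A j, (∏ j, σ j (privH j (List.ofFn m)) (a j)) *
                (∑ sv : Fin n → S, P (Function.update a i b) sv *
                  W δ (u i) P σ (List.ofFn m ++ [(sv, a)]))) + (ε + γ) := hCle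
        _ ≤ (∑ m : Fin o.length → ((Fin n → S) × (∀ j, A j)), β i o m *
              ∑ a : ∀ j, A j, (∏ j, σ j (privH j (List.ofFn m)) (a j)) *
                ∑ sv : Fin n → S, P (Function.update a i b) sv *
                  W δ (u i) P σ (List.ofFn m ++ [(sv, Function.update a i c0)])) + (ε + γ) := by
            linarith [hCsplit]
    have h3 := mul_le_mul_of_nonneg_left hCC' hδ0
    nlinarith [h1, h3]
  -- Bayes' rule and conclusion
  rw [div_le_iff₀ hDpos]
  have hnum : (∑ m : Fin o.length → ((Fin n → S) × (∀ j, A j)),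
        consInd i o m * outProb P σ [] (List.ofFn m) *
          (expPay (u i)
              (Function.update (fun j => σ j (privH j (List.ofFn m))) i (pureAct i b)) -
            expPay (u i) (fun j => σ j (privH j (List.ofFn m)))))
      = (∑ m' : Fin o.length → ((Fin n → S) × (∀ j, A j)),
          consInd i o m' * outProb P σ [] (List.ofFn m')) *
        ∑ m : Fin o.length → ((Fin n → S) × (∀ j, A j)), β i o m *
          (expPay (u i)
              (Function.update (fun j => σ j (privH j (List.ofFn m))) i (pureAct i b)) -
            expPay (u i) (fun j => σ j (privH j (List.ofFn m)))) := by
    rw [Finset.mul_sum]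
    apply Finset.sum_congr rfl
    intro m _
    rw [← hβBayes i o hDpos m]
    ring
  rw [hnum]
  calc (∑ m' : Fin o.length → ((Fin n → S) × (∀ j, A j)),
          consInd i o m' * outProb P σ [] (List.ofFn m')) *
        ∑ m : Fin o.length → ((Fin n → S) × (∀ j, A j)), β i o m *
          (expPay (u i)
              (Function.update (fun j => σ j (privH j (List.ofFn m))) i (pureAct i b)) -
            expPay (u i) (fun j => σ j (privH j (List.ofFn m))))
      ≤ (∑ m' : Fin o.length → ((Fin n → S) × (∀ j, A j)),
          consInd i o m' * outProb P σ [] (List.ofFn m')) * (δ / (1 - δ) * (ε + γ)) :=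
        mul_le_mul_of_nonneg_left hfinal (le_of_lt hDpos)
    _ = δ / (1 - δ) * (ε + γ) * (∑ m' : Fin o.length → ((Fin n → S) × (∀ j, A j)),
          consInd i o m' * outProb P σ [] (List.ofFn m')) := mul_comm _ _
end

section
/- Let S be a finite set, let P and Q be probability distributions on S, and let ε, γ ≥ 0 with ε < 1. Suppose that for every event E ⊆ S, Q(E) ≥ exp(−ε)·P(E) − γ. Then for every function V : S → [0,1], the difference of expectations satisfies Σ_{s ∈ S} V(s)·(P(s) − Q(s)) ≤ ε + γ. -/
open scoped BigOperators

/-- **Key expectation-gap lemma.**  Let `S` be a finite set, `P` and `Q` probability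
distributions on `S`, and `ε, γ ≥ 0` with `ε < 1`.  If for every event `E ⊆ S` we have
`Q(E) ≥ exp(-ε)·P(E) - γ`, then for every function `V : S → [0,1]`,
`∑ s, V s * (P s - Q s) ≤ ε + γ`. -/
theorem expectation_gap_of_eventwise_dp {S : Type*} [Fintype S]
    (P Q : S → ℝ)
    (hP0 : ∀ s, 0 ≤ P s) (hQ0 : ∀ s, 0 ≤ Q s)
    (hP1 : ∑ s, P s = 1) (hQ1 : ∑ s, Q s = 1)
    (ε γ : ℝ) (hε0 : 0 ≤ ε) (hγ0 : 0 ≤ γ) (hε1 : ε < 1)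
    (hDP : ∀ E : Finset S, Real.exp (-ε) * (∑ s ∈ E, P s) - γ ≤ ∑ s ∈ E, Q s)
    (V : S → ℝ) (hV : ∀ s, V s ∈ Set.Icc (0 : ℝ) 1) :
    ∑ s, V s * (P s - Q s) ≤ ε + γ := by
  classical
  set E : Finset S := Finset.univ.filter (fun s => Q s < P s) with hE
  have h1 : ∑ s, V s * (P s - Q s) ≤ ∑ s ∈ E, (P s - Q s) := by
    have hsplit := Finset.sum_filter_add_sum_filter_not Finset.univ
      (fun s => Q s < P s) (fun s => V s * (P s - Q s))
    calc ∑ s, V s * (P s - Q s)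
        = ∑ s ∈ E, V s * (P s - Q s)
          + ∑ s ∈ Finset.univ.filter (fun s => ¬ Q s < P s), V s * (P s - Q s) := hsplit.symm
      _ ≤ ∑ s ∈ E, (P s - Q s) + 0 := by
          apply add_le_add
          · apply Finset.sum_le_sum
            intro s hs
            have hpq : 0 ≤ P s - Q s := le_of_lt (sub_pos.mpr (Finset.mem_filter.mp hs).2)
            nlinarith [(hV s).1, (hV s).2]
          · apply Finset.sum_nonpos
            intro s hs
            have hpq : P s - Q s ≤ 0 := by
              have := not_lt.mp (Finset.mem_filter.mp hs).2
              linarith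
            nlinarith [(hV s).1, (hV s).2]
      _ = _ := add_zero _
  have hPE1 : ∑ s ∈ E, P s ≤ 1 := by
    rw [← hP1]
    exact Finset.sum_le_sum_of_subset_of_nonneg (Finset.subset_univ _) (fun s _ _ => hP0 s)
  have hPE0 : 0 ≤ ∑ s ∈ E, P s := Finset.sum_nonneg fun s _ => hP0 s
  have hexp : 1 - ε ≤ Real.exp (-ε) := by
    have := Real.add_one_le_exp (-ε); linarith
  have h2 := hDP E
  have h3 : ∑ s ∈ E, (P s - Q s) ≤ ε + γ := by
    rw [Finset.sum_sub_distrib]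
    nlinarith
  linarith
end

section
/- Fix σ > 0 and d ∈ ℕ. There is a constant C (depending only on σ) such that for every s ∈ (0, 1/2] and every function f : T^n → ℝ^d with L² sensitivity at most s, the mechanism that outputs f(t) + Z, where Z ∈ ℝ^d has coordinates drawn i.i.d. from N(0,σ²), is (ε,γ)-differentially private for some ε, γ ≥ 0 with ε + γ ≤ C·s·√(log(1/s)). In particular, if the sensitivity s = s(n) is O(1/n) as the number of coordinates n grows, then the mechanism is (ε,γ)-differentially private with ε + γ = O(√(log n)/n). -/
open MeasureTheory ProbabilityTheory
open scoped BigOperators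

/-- The Gaussian mechanism: on input `t`, output `f t + Z` where `Z ∈ ℝ^d` has
coordinates drawn i.i.d. from `N(0, σ²)`. -/
noncomputable def gaussMech {T : Type} {n d : ℕ} (f : (Fin n → T) → (Fin d → ℝ))
    (σ : ℝ) (t : Fin n → T) : Measure (Fin d → ℝ) :=
  Measure.map (fun z => f t + z)
    (Measure.pi fun _ : Fin d => gaussianReal 0 (σ ^ 2).toNNReal)


open Real
open scoped NNReal ENNReal

section GaussAux

variable {σ : ℝ}

private lemma var_ne (hσ : 0 < σ) : (σ ^ 2).toNNReal ≠ 0 := by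
  simp only [ne_eq, Real.toNNReal_eq_zero, not_le]; positivity

private lemma var_coe : (((σ ^ 2).toNNReal : ℝ≥0) : ℝ) = σ ^ 2 :=
  Real.coe_toNNReal _ (sq_nonneg σ)

private lemma pdf_le (hσ : 0 < σ) (a x : ℝ) :
    gaussianPDFReal a (σ ^ 2).toNNReal x ≤ 1 / σ := by
  have hc : (((σ ^ 2).toNNReal : ℝ≥0) : ℝ) = σ ^ 2 := var_coe
  rw [gaussianPDFReal, hc]
  have h1 : Real.exp (-(x - a) ^ 2 / (2 * σ ^ 2)) ≤ 1 := by
    rw [Real.exp_le_one_iff]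
    have : (0:ℝ) ≤ (x - a) ^ 2 / (2 * σ ^ 2) := by positivity
    rw [neg_div]
    linarith
  have h2 : σ ≤ Real.sqrt (2 * π * σ ^ 2) := by
    have : σ = Real.sqrt (σ ^ 2) := (Real.sqrt_sq hσ.le).symm
    rw [this]
    apply Real.sqrt_le_sqrt
    nlinarith [Real.pi_gt_three, sq_nonneg σ]
  have h3 : (Real.sqrt (2 * π * σ ^ 2))⁻¹ ≤ 1 / σ := by
    rw [one_div]
    exact inv_anti₀ hσ h2
  calc (Real.sqrt (2 * π * σ ^ 2))⁻¹ * Real.exp (-(x - a) ^ 2 / (2 * σ ^ 2))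
      ≤ (Real.sqrt (2 * π * σ ^ 2))⁻¹ * 1 := by
        apply mul_le_mul_of_nonneg_left h1 (by positivity)
    _ = (Real.sqrt (2 * π * σ ^ 2))⁻¹ := mul_one _
    _ ≤ 1 / σ := h3

private lemma gauss_Icc_le (hσ : 0 < σ) (c e : ℝ) :
    gaussianReal 0 (σ ^ 2).toNNReal (Set.Icc c e) ≤ ENNReal.ofReal ((e - c) / σ) := by
  rw [gaussianReal_apply _ (var_ne hσ)]
  calc ∫⁻ x in Set.Icc c e, gaussianPDF 0 (σ ^ 2).toNNReal x
      ≤ ∫⁻ _ in Set.Icc c e, ENNReal.ofReal (1 / σ) := by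
        apply setLIntegral_mono measurable_const
        intro x _
        exact ENNReal.ofReal_le_ofReal (pdf_le hσ 0 x)
    _ = ENNReal.ofReal (1 / σ) * volume (Set.Icc c e) := setLIntegral_const _ _
    _ = ENNReal.ofReal (1 / σ) * ENNReal.ofReal (e - c) := by rw [Real.volume_Icc]
    _ = ENNReal.ofReal ((e - c) / σ) := by
        rw [← ENNReal.ofReal_mul (by positivity)]
        ring_nf

private lemma gauss_shift (hσ : 0 < σ) (a : ℝ) {S : Set ℝ} (hS : MeasurableSet S) :
    gaussianReal a (σ ^ 2).toNNReal S
      = gaussianReal 0 (σ ^ 2).toNNReal ((a + ·) ⁻¹' S) := by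
  have h := gaussianReal_map_const_add (μ := 0) (v := (σ ^ 2).toNNReal) a
  rw [zero_add] at h
  rw [← h, Measure.map_apply (measurable_const_add a) hS]

private lemma shifted_lintegral_le (hσ : 0 < σ) (a b : ℝ) {g : ℝ → ℝ≥0∞}
    (hg : Measurable g) (hg1 : ∀ x, g x ≤ 1) :
    ∫⁻ x, g x ∂(gaussianReal a (σ ^ 2).toNNReal)
      ≤ ∫⁻ x, g x ∂(gaussianReal b (σ ^ 2).toNNReal)
        + ENNReal.ofReal (|a - b| / σ) := by
  set V := (σ ^ 2).toNNReal with hVdef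
  have hV : V ≠ 0 := var_ne hσ
  have hVc : ((V : ℝ≥0) : ℝ) = σ ^ 2 := var_coe
  have hVpos : (0:ℝ) < (V : ℝ≥0) := by rw [hVc]; positivity
  set pa := gaussianPDFReal a V with hpa
  set pb := gaussianPDFReal b V with hpb
  set H := {x : ℝ | pb x ≤ pa x} with hHdef
  have hH : MeasurableSet H :=
    measurableSet_le (measurable_gaussianPDFReal b V) (measurable_gaussianPDFReal a V)
  rw [gaussianReal_of_var_ne_zero a hV, gaussianReal_of_var_ne_zero b hV,
    lintegral_withDensity_eq_lintegral_mul _ (measurable_gaussianPDF a V) hg,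
    lintegral_withDensity_eq_lintegral_mul _ (measurable_gaussianPDF b V) hg]
  have hmb : Measurable (gaussianPDF b V * g) := (measurable_gaussianPDF b V).mul hg
  have key : ∫⁻ x in H, ENNReal.ofReal (pa x - pb x) ≤ ENNReal.ofReal (|a - b| / σ) := by
    -- first: this integral equals μ_a H - μ_b H
    have heq : ∫⁻ x in H, ENNReal.ofReal (pa x - pb x)
        = gaussianReal a V H - gaussianReal b V H := by
      have h1 : ∀ x ∈ H, ENNReal.ofReal (pa x - pb x)
          = gaussianPDF a V x - gaussianPDF b V x := by
        intro x hx
        rw [gaussianPDF, gaussianPDF, ENNReal.ofReal_sub _ (gaussianPDFReal_nonneg b V x)]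
      rw [setLIntegral_congr_fun hH h1]
      rw [lintegral_sub (measurable_gaussianPDF b V)]
      · rw [gaussianReal_apply _ hV, gaussianReal_apply _ hV]
      · refine ne_of_lt (lt_of_le_of_lt (lintegral_mono' Measure.restrict_le_self le_rfl) ?_)
        rw [lintegral_gaussianPDF_eq_one b hV]; exact ENNReal.one_lt_top
      · filter_upwards [ae_restrict_mem hH] with x hx
        exact ENNReal.ofReal_le_ofReal hx
    rw [heq, tsub_le_iff_right]
    -- identify H and bound
    rcases lt_trichotomy a b with hab | hab | hab
    · have hHeq : H = Set.Iic ((a + b) / 2) := by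
        ext x
        simp only [hHdef, Set.mem_setOf_eq, Set.mem_Iic, hpa, hpb, gaussianPDFReal]
        rw [mul_le_mul_iff_right₀ (by positivity)]
        rw [Real.exp_le_exp, div_le_div_iff_of_pos_right (by positivity), neg_le_neg_iff]
        constructor
        · intro h; nlinarith
        · intro h; nlinarith
      set m := (a + b) / 2
      rw [hHeq, gauss_shift hσ a measurableSet_Iic, gauss_shift hσ b measurableSet_Iic]
      have hpre : ∀ c : ℝ, (c + ·) ⁻¹' Set.Iic m = Set.Iic (m - c) := by
        intro c; ext x; simp [le_sub_iff_add_le, add_comm]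
      rw [hpre a, hpre b]
      have hsub : Set.Iic (m - a) ⊆ Set.Icc (m - b) (m - a) ∪ Set.Iic (m - b) := by
        intro x hx
        rcases le_or_gt x (m - b) with h | h
        · exact Or.inr h
        · exact Or.inl ⟨h.le, hx⟩
      calc gaussianReal 0 V (Set.Iic (m - a))
          ≤ gaussianReal 0 V (Set.Icc (m - b) (m - a)) + gaussianReal 0 V (Set.Iic (m - b)) :=
            le_trans (measure_mono hsub) (measure_union_le _ _)
        _ ≤ ENNReal.ofReal (|a - b| / σ) + gaussianReal 0 V (Set.Iic (m - b)) := by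
            gcongr
            have := gauss_Icc_le hσ (m - b) (m - a)
            have he : m - a - (m - b) = |a - b| := by
              rw [abs_of_neg (by linarith)]; ring
            rwa [he] at this
    · subst hab
      simp only [sub_self, abs_zero, zero_div, ENNReal.ofReal_zero, zero_add]
      exact le_rfl
    · have hHeq : H = Set.Ici ((a + b) / 2) := by
        ext x
        simp only [hHdef, Set.mem_setOf_eq, Set.mem_Ici, hpa, hpb, gaussianPDFReal]
        rw [mul_le_mul_iff_right₀ (by positivity)]
        rw [Real.exp_le_exp, div_le_div_iff_of_pos_right (by positivity), neg_le_neg_iff]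
        constructor
        · intro h; nlinarith
        · intro h; nlinarith
      set m := (a + b) / 2
      rw [hHeq, gauss_shift hσ a measurableSet_Ici, gauss_shift hσ b measurableSet_Ici]
      have hpre : ∀ c : ℝ, (c + ·) ⁻¹' Set.Ici m = Set.Ici (m - c) := by
        intro c; ext x; simp [sub_le_iff_le_add, add_comm]
      rw [hpre a, hpre b]
      have hsub : Set.Ici (m - a) ⊆ Set.Icc (m - a) (m - b) ∪ Set.Ici (m - b) := by
        intro x hx
        rcases le_or_gt (m - b) x with h | h
        · exact Or.inr h
        · exact Or.inl ⟨hx, h.le⟩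
      calc gaussianReal 0 V (Set.Ici (m - a))
          ≤ gaussianReal 0 V (Set.Icc (m - a) (m - b)) + gaussianReal 0 V (Set.Ici (m - b)) :=
            le_trans (measure_mono hsub) (measure_union_le _ _)
        _ ≤ ENNReal.ofReal (|a - b| / σ) + gaussianReal 0 V (Set.Ici (m - b)) := by
            gcongr
            have := gauss_Icc_le hσ (m - a) (m - b)
            have he : m - b - (m - a) = |a - b| := by
              rw [abs_of_pos (by linarith)]; ring
            rwa [he] at this
  have hsplit : ∀ f : ℝ → ℝ≥0∞,
      ∫⁻ x, f x = (∫⁻ x in H, f x) + ∫⁻ x in Hᶜ, f x :=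
    fun f => (lintegral_add_compl (μ := volume) f hH).symm
  calc ∫⁻ x, (gaussianPDF a V * g) x
      = (∫⁻ x in H, (gaussianPDF a V * g) x) + ∫⁻ x in Hᶜ, (gaussianPDF a V * g) x :=
        hsplit _
    _ ≤ ((∫⁻ x in H, (gaussianPDF b V * g) x) + ∫⁻ x in H, ENNReal.ofReal (pa x - pb x))
        + ∫⁻ x in Hᶜ, (gaussianPDF b V * g) x := by
        gcongr ?_ + ?_
        · rw [← lintegral_add_right' _ (g := fun x => ENNReal.ofReal (pa x - pb x)) (((measurable_gaussianPDFReal a V).sub (measurable_gaussianPDFReal b V)).ennreal_ofReal.aemeasurable)]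
          apply setLIntegral_mono' hH
          intro x hx
          simp only [Pi.mul_apply, Pi.add_apply]
          have hd : gaussianPDF a V x
              = gaussianPDF b V x + ENNReal.ofReal (pa x - pb x) := by
            rw [gaussianPDF, gaussianPDF, ← ENNReal.ofReal_add (gaussianPDFReal_nonneg b V x)
              (sub_nonneg.mpr hx)]
            congr 1; ring
          rw [hd, add_mul]
          gcongr
          calc ENNReal.ofReal (pa x - pb x) * g x
              ≤ ENNReal.ofReal (pa x - pb x) * 1 := by gcongr; exact hg1 x
            _ = ENNReal.ofReal (pa x - pb x) := mul_one _
        · apply setLIntegral_mono' hH.compl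
          intro x hx
          simp only [Pi.mul_apply]
          gcongr
          simp only [hHdef, Set.mem_compl_iff, Set.mem_setOf_eq, not_le] at hx
          exact ENNReal.ofReal_le_ofReal hx.le
    _ = ((∫⁻ x in H, (gaussianPDF b V * g) x) + ∫⁻ x in Hᶜ, (gaussianPDF b V * g) x)
        + ∫⁻ x in H, ENNReal.ofReal (pa x - pb x) := by ring
    _ ≤ (∫⁻ x, (gaussianPDF b V * g) x) + ENNReal.ofReal (|a - b| / σ) := by
        rw [← hsplit]
        gcongr

private lemma pi_shifted_lintegral_le (hσ : 0 < σ) :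
    ∀ (d : ℕ) (a b : Fin d → ℝ) (g : (Fin d → ℝ) → ℝ≥0∞), Measurable g → (∀ z, g z ≤ 1) →
    ∫⁻ z, g z ∂(Measure.pi fun j => gaussianReal (a j) (σ ^ 2).toNNReal)
      ≤ (∫⁻ z, g z ∂(Measure.pi fun j => gaussianReal (b j) (σ ^ 2).toNNReal))
        + ∑ j, ENNReal.ofReal (|a j - b j| / σ) := by
  intro d
  induction d with
  | zero =>
    intro a b g hg hg1
    rw [Measure.pi_of_empty, Measure.pi_of_empty, lintegral_dirac]
    simp
  | succ d IH =>
    intro a b g hg hg1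
    set V := (σ ^ 2).toNNReal with hVdef
    set e := MeasurableEquiv.piFinSuccAbove (fun _ : Fin (d + 1) => ℝ) 0 with hedef
    have hrw : ∀ c : Fin (d + 1) → ℝ,
        (fun j : Fin d => gaussianReal (c ((0 : Fin (d + 1)).succAbove j)) V)
          = fun j : Fin d => gaussianReal (c j.succ) V := by
      intro c; funext j; rw [Fin.zero_succAbove]
    have hlift : ∀ c : Fin (d + 1) → ℝ,
        ∫⁻ z, g z ∂(Measure.pi fun j => gaussianReal (c j) V)
          = ∫⁻ x, ∫⁻ y, g (e.symm (x, y))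
              ∂(Measure.pi fun j : Fin d => gaussianReal (c j.succ) V)
              ∂(gaussianReal (c 0) V) := by
      intro c
      have mp := measurePreserving_piFinSuccAbove
        (fun j : Fin (d + 1) => gaussianReal (c j) V) 0
      rw [hrw c] at mp
      calc ∫⁻ z, g z ∂(Measure.pi fun j => gaussianReal (c j) V)
          = ∫⁻ p, g (e.symm p)
              ∂((gaussianReal (c 0) V).prod
                (Measure.pi fun j : Fin d => gaussianReal (c j.succ) V)) := by
            rw [← mp.map_eq, lintegral_map (show Measurable fun p : ℝ × (Fin d → ℝ) => g (e.symm p) from hg.comp e.symm.measurable) e.measurable]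
            simp only [MeasurableEquiv.symm_apply_apply]
        _ = _ := lintegral_prod _ ((hg.comp e.symm.measurable).aemeasurable)
    rw [hlift a, hlift b]
    have hinner_meas : ∀ c : Fin (d + 1) → ℝ, Measurable fun x =>
        ∫⁻ y, g (e.symm (x, y)) ∂(Measure.pi fun j : Fin d => gaussianReal (c j.succ) V) :=
      fun c => (hg.comp e.symm.measurable).lintegral_prod_right'
    have hinner_le_one : ∀ (c : Fin (d + 1) → ℝ) (x : ℝ),
        (∫⁻ y, g (e.symm (x, y)) ∂(Measure.pi fun j : Fin d => gaussianReal (c j.succ) V)) ≤ 1 := by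
      intro c x
      calc ∫⁻ y, g (e.symm (x, y)) ∂(Measure.pi fun j : Fin d => gaussianReal (c j.succ) V)
          ≤ ∫⁻ _, 1 ∂(Measure.pi fun j : Fin d => gaussianReal (c j.succ) V) :=
            lintegral_mono fun y => hg1 _
        _ = 1 := by rw [lintegral_one, measure_univ]
    calc ∫⁻ x, (∫⁻ y, g (e.symm (x, y)) ∂(Measure.pi fun j : Fin d => gaussianReal (a j.succ) V))
          ∂(gaussianReal (a 0) V)
        ≤ ∫⁻ x, ((∫⁻ y, g (e.symm (x, y)) ∂(Measure.pi fun j : Fin d => gaussianReal (b j.succ) V))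
            + ∑ j : Fin d, ENNReal.ofReal (|a j.succ - b j.succ| / σ)) ∂(gaussianReal (a 0) V) := by
          apply lintegral_mono
          intro x
          exact IH (fun j => a j.succ) (fun j => b j.succ) (fun y => g (e.symm (x, y)))
            (hg.comp (e.symm.measurable.comp measurable_prodMk_left)) (fun y => hg1 _)
      _ = (∫⁻ x, (∫⁻ y, g (e.symm (x, y))
            ∂(Measure.pi fun j : Fin d => gaussianReal (b j.succ) V)) ∂(gaussianReal (a 0) V))
          + ∑ j : Fin d, ENNReal.ofReal (|a j.succ - b j.succ| / σ) := by
          rw [lintegral_add_right _ measurable_const, lintegral_const, measure_univ, mul_one]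
      _ ≤ ((∫⁻ x, (∫⁻ y, g (e.symm (x, y))
            ∂(Measure.pi fun j : Fin d => gaussianReal (b j.succ) V)) ∂(gaussianReal (b 0) V))
            + ENNReal.ofReal (|a 0 - b 0| / σ))
          + ∑ j : Fin d, ENNReal.ofReal (|a j.succ - b j.succ| / σ) := by
          gcongr
          exact shifted_lintegral_le hσ (a 0) (b 0) (hinner_meas b) (hinner_le_one b)
      _ = (∫⁻ x, (∫⁻ y, g (e.symm (x, y))
            ∂(Measure.pi fun j : Fin d => gaussianReal (b j.succ) V)) ∂(gaussianReal (b 0) V))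
          + ∑ j : Fin (d + 1), ENNReal.ofReal (|a j - b j| / σ) := by
          rw [Fin.sum_univ_succ]
          ring

private lemma pi_shifted_measure_le (hσ : 0 < σ) {d : ℕ} (a b : Fin d → ℝ)
    {E : Set (Fin d → ℝ)} (hE : MeasurableSet E) :
    (Measure.pi fun j => gaussianReal (a j) (σ ^ 2).toNNReal) E
      ≤ (Measure.pi fun j => gaussianReal (b j) (σ ^ 2).toNNReal) E
        + ∑ j, ENNReal.ofReal (|a j - b j| / σ) := by
  have h := pi_shifted_lintegral_le hσ d a b (E.indicator 1)
    (measurable_one.indicator hE)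
    (fun z => by
      by_cases hz : z ∈ E <;> simp [Set.indicator_apply, hz])
  rwa [lintegral_indicator_one hE, lintegral_indicator_one hE] at h

private lemma gaussMech_eq_pi (hσ : 0 < σ) {T : Type} {n d : ℕ} (f : (Fin n → T) → (Fin d → ℝ))
    (t : Fin n → T) :
    gaussMech f σ t = Measure.pi fun j => gaussianReal (f t j) (σ ^ 2).toNNReal := by
  have mp : MeasurePreserving (fun z : Fin d → ℝ => f t + z)
      (Measure.pi fun _ : Fin d => gaussianReal 0 (σ ^ 2).toNNReal)
      (Measure.pi fun j => gaussianReal (f t j) (σ ^ 2).toNNReal) := by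
    have h := MeasureTheory.measurePreserving_pi
      (fun _ : Fin d => gaussianReal 0 (σ ^ 2).toNNReal)
      (fun j : Fin d => gaussianReal (f t j) (σ ^ 2).toNNReal)
      (f := fun (j : Fin d) (x : ℝ) => f t j + x)
      (fun j => ⟨measurable_const_add _, by
        rw [gaussianReal_map_const_add, zero_add]⟩)
    exact h
  exact mp.map_eq

private lemma gaussMech_toReal_le (hσ : 0 < σ) {T : Type} {n d : ℕ}
    (f : (Fin n → T) → (Fin d → ℝ)) (s : ℝ) (hs : 0 ≤ s)
    (t₁ t₂ : Fin n → T) (hb : ∀ j, |f t₁ j - f t₂ j| ≤ s)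
    {E : Set (Fin d → ℝ)} (hE : MeasurableSet E) :
    (gaussMech f σ t₁ E).toReal ≤ (gaussMech f σ t₂ E).toReal + d * s / σ := by
  rw [gaussMech_eq_pi hσ f t₁, gaussMech_eq_pi hσ f t₂]
  have h1 := pi_shifted_measure_le hσ (fun j => f t₁ j) (fun j => f t₂ j) hE
  have h2 : ∑ j : Fin d, ENNReal.ofReal (|f t₁ j - f t₂ j| / σ)
      ≤ ENNReal.ofReal (d * s / σ) := by
    calc ∑ j : Fin d, ENNReal.ofReal (|f t₁ j - f t₂ j| / σ)
        ≤ ∑ _j : Fin d, ENNReal.ofReal (s / σ) := by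
          apply Finset.sum_le_sum
          intro j _
          apply ENNReal.ofReal_le_ofReal
          gcongr
          exact hb j
      _ = (d : ℝ≥0∞) * ENNReal.ofReal (s / σ) := by
          rw [Finset.sum_const, Finset.card_univ, Fintype.card_fin, nsmul_eq_mul]
      _ = ENNReal.ofReal (d * s / σ) := by
          rw [← ENNReal.ofReal_natCast d, ← ENNReal.ofReal_mul (by positivity)]
          rw [mul_div_assoc]
  have h3 : (Measure.pi fun j => gaussianReal (f t₁ j) (σ ^ 2).toNNReal) E
      ≤ (Measure.pi fun j => gaussianReal (f t₂ j) (σ ^ 2).toNNReal) E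
        + ENNReal.ofReal (d * s / σ) :=
    h1.trans (add_le_add le_rfl h2)
  have hfin : (Measure.pi fun j => gaussianReal (f t₂ j) (σ ^ 2).toNNReal) E ≠ ⊤ :=
    measure_ne_top _ _
  calc ((Measure.pi fun j => gaussianReal (f t₁ j) (σ ^ 2).toNNReal) E).toReal
      ≤ ((Measure.pi fun j => gaussianReal (f t₂ j) (σ ^ 2).toNNReal) E
          + ENNReal.ofReal (d * s / σ)).toReal := by
        apply ENNReal.toReal_mono _ h3
        exact ENNReal.add_ne_top.mpr ⟨hfin, ENNReal.ofReal_ne_top⟩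
    _ = _ := by
        rw [ENNReal.toReal_add hfin ENNReal.ofReal_ne_top,
          ENNReal.toReal_ofReal (by positivity)]

/-- Core DP statement with `ε = 0`, `γ = d·s/σ`. -/
private lemma gaussMech_dp_core (hσ : 0 < σ) {T : Type} {n d : ℕ}
    (f : (Fin n → T) → (Fin d → ℝ)) (s : ℝ) (hs : 0 ≤ s)
    (hsens : ∀ (t : Fin n → T) (i : Fin n) (t' : T),
      Real.sqrt (∑ j, (f t j - f (Function.update t i t') j) ^ 2) ≤ s) :
    ∀ (t : Fin n → T) (i : Fin n) (t' : T) (E : Set (Fin d → ℝ)), MeasurableSet E →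
      Real.exp (-(0:ℝ)) * (gaussMech f σ (Function.update t i t') E).toReal - d * s / σ
          ≤ (gaussMech f σ t E).toReal ∧
        (gaussMech f σ t E).toReal
          ≤ Real.exp (0:ℝ) * (gaussMech f σ (Function.update t i t') E).toReal + d * s / σ := by
  have hcoord : ∀ (t : Fin n → T) (i : Fin n) (t' : T) (j : Fin d),
      |f t j - f (Function.update t i t') j| ≤ s := by
    intro t i t' j
    calc |f t j - f (Function.update t i t') j|
        = Real.sqrt ((f t j - f (Function.update t i t') j) ^ 2) :=
          (Real.sqrt_sq_eq_abs _).symm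
      _ ≤ Real.sqrt (∑ k, (f t k - f (Function.update t i t') k) ^ 2) :=
          Real.sqrt_le_sqrt (Finset.single_le_sum
            (f := fun k => (f t k - f (Function.update t i t') k) ^ 2)
            (fun k _ => sq_nonneg _) (Finset.mem_univ j))
      _ ≤ s := hsens t i t'
  intro t i t' E hE
  constructor
  · rw [neg_zero, Real.exp_zero, one_mul, sub_le_iff_le_add]
    exact gaussMech_toReal_le hσ f s hs (Function.update t i t') t
      (fun j => by rw [abs_sub_comm]; exact hcoord t i t' j) hE
  · rw [Real.exp_zero, one_mul]
    exact gaussMech_toReal_le hσ f s hs t (Function.update t i t') (hcoord t i t') hE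


end GaussAux

/-- **Gaussian noise of fixed variance on a low-sensitivity function.**  Fix `σ > 0` and
`d ∈ ℕ`.  There is a constant `C` (depending only on `σ`) such that for every
`s ∈ (0, 1/2]` and every `f : T^n → ℝ^d` of L² sensitivity at most `s`, the mechanism
`t ↦ f t + Z` with `Z` i.i.d. `N(0,σ²)` per coordinate is `(ε,γ)`-differentially private
for some `ε, γ ≥ 0` with `ε + γ ≤ C·s·√(log(1/s))`.  In particular, if the sensitivity
is at most `c/n`, the mechanism is `(ε,γ)`-differentially private with
`ε + γ ≤ C'·√(log n)/n` for a uniform constant `C'` and all `n ≥ 2`. -/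
theorem gaussMech_fixed_noise_dp (σ : ℝ) (hσ : 0 < σ) (d : ℕ) :
    (∃ C : ℝ, ∀ (T : Type) (n : ℕ) (s : ℝ), 0 < s → s ≤ 1 / 2 →
      ∀ f : (Fin n → T) → (Fin d → ℝ),
        (∀ (t : Fin n → T) (i : Fin n) (t' : T),
          Real.sqrt (∑ j, (f t j - f (Function.update t i t') j) ^ 2) ≤ s) →
        ∃ ε γ : ℝ, 0 ≤ ε ∧ 0 ≤ γ ∧ ε + γ ≤ C * s * Real.sqrt (Real.log (1 / s)) ∧
          ∀ (t : Fin n → T) (i : Fin n) (t' : T) (E : Set (Fin d → ℝ)), MeasurableSet E →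
            Real.exp (-ε) * (gaussMech f σ (Function.update t i t') E).toReal - γ
                ≤ (gaussMech f σ t E).toReal ∧
              (gaussMech f σ t E).toReal
                ≤ Real.exp ε * (gaussMech f σ (Function.update t i t') E).toReal + γ) ∧
    (∀ c : ℝ, 0 < c → ∃ C' : ℝ, ∀ (T : Type) (n : ℕ), 2 ≤ n →
      ∀ f : (Fin n → T) → (Fin d → ℝ),
        (∀ (t : Fin n → T) (i : Fin n) (t' : T),
          Real.sqrt (∑ j, (f t j - f (Function.update t i t') j) ^ 2) ≤ c / n) →
        ∃ ε γ : ℝ, 0 ≤ ε ∧ 0 ≤ γ ∧ ε + γ ≤ C' * Real.sqrt (Real.log n) / n ∧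
          ∀ (t : Fin n → T) (i : Fin n) (t' : T) (E : Set (Fin d → ℝ)), MeasurableSet E →
            Real.exp (-ε) * (gaussMech f σ (Function.update t i t') E).toReal - γ
                ≤ (gaussMech f σ t E).toReal ∧
              (gaussMech f σ t E).toReal
                ≤ Real.exp ε * (gaussMech f σ (Function.update t i t') E).toReal + γ) := by
  have hlog2 : (0:ℝ) < Real.sqrt (Real.log 2) :=
    Real.sqrt_pos.mpr (Real.log_pos one_lt_two)
  constructor
  · refine ⟨d / (σ * Real.sqrt (Real.log 2)), ?_⟩
    intro T n s hs hs2 f hf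
    refine ⟨0, d * s / σ, le_rfl, by positivity, ?_, gaussMech_dp_core hσ f s hs.le hf⟩
    have h1 : Real.sqrt (Real.log 2) ≤ Real.sqrt (Real.log (1 / s)) := by
      apply Real.sqrt_le_sqrt
      apply Real.log_le_log (by norm_num)
      rw [le_div_iff₀ hs]
      linarith
    have h2 : d / (σ * Real.sqrt (Real.log 2)) * s * Real.sqrt (Real.log 2)
        = d * s / σ := by
      field_simp
    have h3 : d / (σ * Real.sqrt (Real.log 2)) * s * Real.sqrt (Real.log 2)
        ≤ d / (σ * Real.sqrt (Real.log 2)) * s * Real.sqrt (Real.log (1 / s)) := by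
      gcongr
    linarith
  · intro c hc
    refine ⟨d * c / (σ * Real.sqrt (Real.log 2)), ?_⟩
    intro T n hn f hf
    have hn0 : (0:ℝ) < (n:ℝ) := by
      have : (2:ℝ) ≤ (n:ℝ) := by exact_mod_cast hn
      linarith
    refine ⟨0, d * (c / n) / σ, le_rfl, by positivity, ?_,
      gaussMech_dp_core hσ f (c / n) (by positivity) hf⟩
    have h1 : Real.sqrt (Real.log 2) ≤ Real.sqrt (Real.log n) := by
      apply Real.sqrt_le_sqrt
      apply Real.log_le_log (by norm_num)
      exact_mod_cast hn
    have h2 : d * c / (σ * Real.sqrt (Real.log 2)) * Real.sqrt (Real.log 2) / n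
        = d * (c / n) / σ := by
      field_simp
    have h3 : d * c / (σ * Real.sqrt (Real.log 2)) * Real.sqrt (Real.log 2) / n
        ≤ d * c / (σ * Real.sqrt (Real.log 2)) * Real.sqrt (Real.log n) / n := by
      gcongr
    linarith
end
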